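/- arXiv:2103.01879 — 5 statements merged into one kernel-verified Lean document; each statement's English description precedes it below -/
import Mathlib

section
/- For every real number z with 0 ≤ z < 1, setting t = z/(1+z) (so 0 ≤ t < 1/2), the series ∑_{n=0}^∞ (binom(2n,n))⁻¹ · H_n · (-1)^n · 4^n · z^n converges and equals (1-t)·[ √t · log((1-√t)/(1+√t)) · (1 + (1/4)·log((1-t)/4)) − (√t/2)·( Li₂((1+√t)/2) − Li₂((1-√t)/2) ) ]. -/
set_option maxHeartbeats 2000000

open Real Finset

/-- The real dilogarithm `Li₂(x) = ∑_{n=1}^∞ xⁿ/n²`. -/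
noncomputable def Li2 (x : ℝ) : ℝ := ∑' n : ℕ, x ^ (n + 1) / (n + 1) ^ 2

lemma aux_harmonic_le (n : ℕ) : (harmonic n : ℝ) ≤ n := by
  induction n with
  | zero => simp
  | succ n ih =>
    rw [harmonic_succ]
    push_cast
    have : ((n:ℝ)+1)⁻¹ ≤ 1 := by
      rw [inv_le_one_iff₀]; right; linarith [Nat.cast_nonneg (α := ℝ) n]
    push_cast at ih
    linarith

lemma aux_beta (n : ℕ) :
    ∫ u in (0:ℝ)..1, (1-u^2)^n = 4^n / ((2*n+1) * (Nat.centralBinom n : ℝ)) := by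
  induction n with
  | zero => simp
  | succ n ih =>
    have hcont : ∀ m : ℕ, IntervalIntegrable (fun u : ℝ => (1-u^2)^m) MeasureTheory.volume 0 1 :=
      fun m => (Continuous.pow (by continuity) m).intervalIntegrable 0 1
    have key : ∫ u in (0:ℝ)..1,
        ((2*(n:ℝ)+3) * (1-u^2)^(n+1) - (2*(n:ℝ)+2) * (1-u^2)^n) = 0 := by
      have hderiv : ∀ u ∈ Set.uIcc (0:ℝ) 1,
          HasDerivAt (fun v : ℝ => v * (1-v^2)^(n+1))
            ((2*(n:ℝ)+3) * (1-u^2)^(n+1) - (2*(n:ℝ)+2) * (1-u^2)^n) u := by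
        intro u _
        have h1 : HasDerivAt (fun v : ℝ => 1 - v^2) (-(2*u)) u := by
          simpa using ((hasDerivAt_pow 2 u).const_sub 1)
        have h2 : HasDerivAt (fun v : ℝ => (1-v^2)^(n+1))
            (((n:ℝ)+1) * (1-u^2)^n * (-(2*u))) u := by
          simpa using (h1.fun_pow (n+1))
        have := (hasDerivAt_id u).mul h2
        refine this.congr_deriv ?_
        simp only [id_eq]
        have hsub : (1-u^2)^(n+1) = (1-u^2)^n * (1-u^2) := by ring
        rw [hsub]; ring
      have := intervalIntegral.integral_eq_sub_of_hasDerivAt hderiv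
        (((hcont (n+1)).const_mul _).sub ((hcont n).const_mul _))
      rw [this]; norm_num
    rw [intervalIntegral.integral_sub ((hcont (n+1)).const_mul _) ((hcont n).const_mul _),
      intervalIntegral.integral_const_mul, intervalIntegral.integral_const_mul, ih] at key
    have hC : (0:ℝ) < (Nat.centralBinom n : ℝ) := by
      exact_mod_cast Nat.centralBinom_pos n
    have hC1 : (0:ℝ) < (Nat.centralBinom (n+1) : ℝ) := by
      exact_mod_cast Nat.centralBinom_pos (n+1)
    have hrec : ((n:ℝ)+1) * (Nat.centralBinom (n+1) : ℝ)
        = 2 * (2*(n:ℝ)+1) * (Nat.centralBinom n : ℝ) := by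
      exact_mod_cast congrArg (Nat.cast : ℕ → ℝ) (Nat.succ_mul_centralBinom_succ n)
    have h23 : (2*(n:ℝ)+3) ≠ 0 := by positivity
    have h21 : (2*(n:ℝ)+1) ≠ 0 := by positivity
    have hJ : ∫ u in (0:ℝ)..1, (1-u^2)^(n+1)
        = (2*(n:ℝ)+2) * (4^n / ((2*n+1) * (Nat.centralBinom n : ℝ))) / (2*(n:ℝ)+3) := by
      field_simp at key ⊢
      linarith [key]
    rw [hJ]
    push_cast
    field_simp
    linear_combination (2*(2*(n:ℝ)+3)*4^n) * hrec

lemma aux_hasSum_logf {w : ℝ} (hw : |w| < 1) :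
    HasSum (fun k : ℕ => w^k / k) (-Real.log (1-w)) := by
  have h := hasSum_pow_div_log_of_abs_lt_one hw
  have h3 : HasSum (fun n : ℕ => (fun k : ℕ => w^k / (k:ℝ)) (n+1))
      ((-Real.log (1-w)) - ∑ i ∈ range 1, w^i / (i:ℝ)) := by
    simp only [range_one, sum_singleton, Nat.cast_zero, div_zero, sub_zero]
    convert h using 2 with n
    push_cast; ring
  exact (hasSum_nat_add_iff' 1).1 h3

lemma aux_norm_summable_logf {w : ℝ} (hw : |w| < 1) :
    Summable (fun k : ℕ => ‖w^k / k‖) := by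
  have hb : ∀ k : ℕ, ‖w^k / (k:ℝ)‖ ≤ |w|^k := by
    intro k
    rw [Real.norm_eq_abs, abs_div, abs_pow]
    rcases Nat.eq_zero_or_pos k with hk | hk
    · subst hk; simp
    · have h1 : (1:ℝ) ≤ |(k:ℝ)| := by
        rw [Nat.abs_cast]; exact_mod_cast hk
      exact div_le_self (pow_nonneg (abs_nonneg w) k) h1
  have hs : Summable (fun k : ℕ => |w|^k) :=
    summable_geometric_of_lt_one (abs_nonneg w) hw
  exact Summable.of_nonneg_of_le (fun k => norm_nonneg _) hb hs

lemma aux_cauchy {f g : ℕ → ℝ} {a b : ℝ} (hf : HasSum f a) (hg : HasSum g b)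
    (hfn : Summable fun k => ‖f k‖) (hgn : Summable fun k => ‖g k‖) :
    HasSum (fun n : ℕ => ∑ k ∈ range (n+1), f k * g (n-k)) (a * b) := by
  have hs : Summable (fun n : ℕ => ∑ k ∈ range (n+1), f k * g (n-k)) :=
    (summable_norm_sum_mul_range_of_summable_norm hfn hgn).of_norm
  have := hs.hasSum
  rwa [← tsum_mul_tsum_eq_tsum_sum_range_of_summable_norm hfn hgn,
    hf.tsum_eq, hg.tsum_eq] at this

lemma aux_hasSum_H {w : ℝ} (hw : |w| < 1) :
    HasSum (fun n : ℕ => (harmonic n : ℝ) * w^n) (-Real.log (1-w) / (1-w)) := by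
  have hgeom : HasSum (fun k : ℕ => w^k) (1-w)⁻¹ := by
    simpa using hasSum_geometric_of_norm_lt_one (show ‖w‖ < 1 by rwa [Real.norm_eq_abs])
  have hgn : Summable (fun k : ℕ => ‖w^k‖) := by
    simpa [Real.norm_eq_abs, abs_pow] using summable_geometric_of_lt_one (abs_nonneg w) hw
  have h := aux_cauchy (aux_hasSum_logf hw) hgeom (aux_norm_summable_logf hw) hgn
  have heq : ∀ n : ℕ, ∑ k ∈ range (n+1), (w^k / k) * w^(n-k) = (harmonic n : ℝ) * w^n := by
    intro n
    rw [Finset.sum_range_succ']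
    simp only [Nat.cast_zero, div_zero, zero_mul, pow_zero, add_zero]
    have : ∀ i ∈ range n, (w^(i+1) / (i+1 : ℕ)) * w^(n-(i+1)) = ((i+1 : ℕ) : ℝ)⁻¹ * w^n := by
      intro i hi
      rw [mem_range] at hi
      rw [div_mul_eq_mul_div, ← pow_add]
      rw [show i+1 + (n - (i+1)) = n from Nat.add_sub_cancel' hi]
      ring
    rw [Finset.sum_congr rfl this, ← Finset.sum_mul]
    congr 1
    rw [harmonic]
    push_cast
    rfl
  rw [funext heq] at h
  have hv : -Real.log (1-w) / (1-w) = -Real.log (1-w) * (1-w)⁻¹ := by ring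
  rw [hv]; exact h

lemma aux_hasSum_nH {w : ℝ} (hw : |w| < 1) :
    HasSum (fun n : ℕ => (n:ℝ) * (harmonic n : ℝ) * w^n)
      (w * (1 - Real.log (1-w)) / (1-w)^2) := by
  have hnorm : ‖w‖ < 1 := by rwa [Real.norm_eq_abs]
  have hg2 : HasSum (fun k : ℕ => (k:ℝ) * w^k) (w / (1-w)^2) :=
    hasSum_coe_mul_geometric_of_norm_lt_one hnorm
  have hg2n : Summable (fun k : ℕ => ‖(k:ℝ) * w^k‖) := by
    have : Summable (fun k : ℕ => (k:ℝ) * |w|^k) :=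
      (hasSum_coe_mul_geometric_of_norm_lt_one
        (show ‖|w|‖ < 1 by rwa [Real.norm_eq_abs, abs_abs])).summable
    apply this.congr
    intro k
    rw [Real.norm_eq_abs, abs_mul, abs_pow, Nat.abs_cast]
  have h := aux_cauchy (aux_hasSum_logf hw) hg2 (aux_norm_summable_logf hw) hg2n
  have heq : ∀ n : ℕ, ∑ k ∈ range (n+1), (w^k / k) * (((n-k : ℕ):ℝ) * w^(n-k))
      = ((n:ℝ) * (harmonic n : ℝ) - n) * w^n := by
    intro n
    rw [Finset.sum_range_succ']
    simp only [Nat.cast_zero, div_zero, zero_mul, add_zero]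
    have hterm : ∀ i ∈ range n, (w^(i+1) / (i+1 : ℕ)) * (((n-(i+1) : ℕ):ℝ) * w^(n-(i+1)))
        = ((n:ℝ) * ((i+1 : ℕ) : ℝ)⁻¹ - 1) * w^n := by
      intro i hi
      rw [mem_range] at hi
      have hpow : w^(i+1) * w^(n-(i+1)) = w^n := by
        rw [← pow_add, Nat.add_sub_cancel' hi]
      have hne : ((i:ℝ)+1) ≠ 0 := by positivity
      have h1 : (w^(i+1) / ((i+1:ℕ):ℝ)) * (((n-(i+1) : ℕ):ℝ) * w^(n-(i+1)))
          = ((n:ℝ) - ((i:ℝ)+1)) * (w^(i+1) * w^(n-(i+1))) / ((i:ℝ)+1) := by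
        rw [Nat.cast_sub hi]
        push_cast
        ring
      rw [h1, hpow]
      push_cast
      field_simp
    rw [Finset.sum_congr rfl hterm, ← Finset.sum_mul]
    congr 1
    rw [Finset.sum_sub_distrib, ← Finset.mul_sum]
    simp only [Finset.sum_const, card_range, nsmul_eq_mul, mul_one]
    rw [harmonic]
    push_cast
    rfl
  rw [funext heq] at h
  have h2 := h.add hg2
  have hfe : (fun n : ℕ => ((n:ℝ) * (harmonic n : ℝ) - n) * w^n + (n:ℝ) * w^n)
      = (fun n : ℕ => (n:ℝ) * (harmonic n : ℝ) * w^n) := by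
    funext n; ring
  rw [hfe] at h2
  convert h2 using 1
  ring

lemma aux_hasSum_F {w : ℝ} (hw : |w| < 1) :
    HasSum (fun n : ℕ => (2*(n:ℝ)+1) * (harmonic n : ℝ) * w^n)
      (2*w*(1 - Real.log (1-w))/(1-w)^2 - Real.log (1-w)/(1-w)) := by
  have h := ((aux_hasSum_nH hw).mul_left 2).add (aux_hasSum_H hw)
  have hfe : (fun n : ℕ => 2 * ((n:ℝ) * (harmonic n : ℝ) * w^n) + (harmonic n : ℝ) * w^n)
      = (fun n : ℕ => (2*(n:ℝ)+1) * (harmonic n : ℝ) * w^n) := by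
    funext n; ring
  rw [hfe] at h
  rw [show (2*w*(1 - Real.log (1-w))/(1-w)^2 - Real.log (1-w)/(1-w)) =
    2 * (w * (1 - Real.log (1-w)) / (1-w)^2) + -Real.log (1-w) / (1-w) by ring]
  exact h


lemma aux_Li2_hasDerivAt {x : ℝ} (h0 : 0 < x) (h1 : x < 1) :
    HasDerivAt Li2 (-Real.log (1-x) / x) x := by
  set r : ℝ := (1+x)/2 with hr
  have hr0 : 0 < r := by rw [hr]; linarith
  have hr1 : r < 1 := by rw [hr]; linarith
  have hxr : x < r := by rw [hr]; linarith
  have hder : HasDerivAt (fun y : ℝ => ∑' n : ℕ, y ^ (n+1) / ((n:ℝ)+1) ^ 2)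
      (∑' n : ℕ, x ^ n / ((n:ℝ)+1)) x := by
    apply hasDerivAt_tsum_of_isPreconnected
      (u := fun n : ℕ => r ^ n)
      (summable_geometric_of_lt_one hr0.le hr1)
      (isOpen_Ioo (a := -r) (b := r))
      ((convex_Ioo _ _).isPreconnected)
      (g' := fun n y => y ^ n / ((n:ℝ)+1))
      (y₀ := 0) (y := x)
    · intro n y _
      have h := (hasDerivAt_pow (n+1) y).div_const (((n:ℝ)+1)^2)
      refine h.congr_deriv ?_
      have hne : ((n:ℝ)+1) ≠ 0 := by positivity
      push_cast
      field_simp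
    · intro n y hy
      have hyr : |y| ≤ r := by
        rw [abs_le]
        exact ⟨hy.1.le, hy.2.le⟩
      rw [Real.norm_eq_abs, abs_div, abs_pow]
      have h2 : (1:ℝ) ≤ |(n:ℝ)+1| := by
        rw [abs_of_nonneg (by positivity)]; linarith [Nat.cast_nonneg (α := ℝ) n]
      calc |y|^n / |(n:ℝ)+1| ≤ |y|^n := div_le_self (pow_nonneg (abs_nonneg y) n) h2
        _ ≤ r^n := pow_le_pow_left₀ (abs_nonneg y) hyr n
    · exact ⟨neg_lt_zero.2 hr0, hr0⟩
    · have hz : (fun n : ℕ => (0:ℝ)^(n+1)/((n:ℝ)+1)^2) = fun _ => (0:ℝ) := by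
        funext n; simp
      rw [hz]; exact summable_zero
    · exact ⟨by linarith, hxr⟩
  have hsum : HasSum (fun n : ℕ => x ^ n / ((n:ℝ)+1)) (-Real.log (1-x) / x) := by
    have h := hasSum_pow_div_log_of_abs_lt_one (show |x| < 1 by rw [abs_of_pos h0]; exact h1)
    have h2 := h.div_const x
    have hfe : (fun n : ℕ => x^(n+1)/((n:ℝ)+1)/x) = fun n : ℕ => x^n/((n:ℝ)+1) := by
      funext n
      rw [pow_succ]
      field_simp
    rw [hfe] at h2
    exact h2
  rw [← hsum.tsum_eq]
  exact hder



lemma aux_ftc {s z : ℝ} (hs0 : 0 < s) (hs1 : s < 1) (hz : z = s^2/(1-s^2)) :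
    ∫ u in (0:ℝ)..1,
      (2*(-z*(1-u^2))*(1 - Real.log (1 - (-z*(1-u^2))))/(1 - (-z*(1-u^2)))^2
        - Real.log (1 - (-z*(1-u^2)))/(1 - (-z*(1-u^2))))
    = (1-s^2) * (s * (Real.log (1-s) - Real.log (1+s))
          * (1 + (1/4)*(Real.log (1-s^2) - 2*Real.log 2))
        - (s/2) * (Li2 ((1+s)/2) - Li2 ((1-s)/2))) := by
  have hq : (0:ℝ) < 1 - s^2 := by nlinarith
  have hz0 : 0 < z := by rw [hz]; positivity
  set q : ℝ := 1 - s^2 with hqdef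
  set d : ℝ := Real.log (1-s^2) with hddef
  set G : ℝ → ℝ := fun u =>
    q*(q-2)*(Real.log (1+s*u) - Real.log (1-s*u))/(2*s)
    + (q*s/2) * ( -d*(Real.log (1+s*u) - Real.log (1-s*u))
        + ((Real.log (1+s*u))^2 - (Real.log (1-s*u))^2)/2
        + Li2 ((1-s*u)/2) - Li2 ((1+s*u)/2)
        + Real.log 2*(Real.log (1+s*u) - Real.log (1-s*u)) )
    + (q^2/(2*s)) * ( (d - Real.log (1-s*u) - Real.log (1+s*u))
        * ((1-s*u)⁻¹ - (1+s*u)⁻¹) + (Real.log (1+s*u) - Real.log (1-s*u)) ) with hGdef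
  have hderiv : ∀ u ∈ Set.uIcc (0:ℝ) 1,
      HasDerivAt G
        (2*(-z*(1-u^2))*(1 - Real.log (1 - (-z*(1-u^2))))/(1 - (-z*(1-u^2)))^2
          - Real.log (1 - (-z*(1-u^2)))/(1 - (-z*(1-u^2)))) u := by
    intro u hu
    rw [Set.uIcc_of_le (zero_le_one)] at hu
    obtain ⟨hu0, hu1⟩ := hu
    have hsu0 : 0 ≤ s*u := by positivity
    have hsu1 : s*u < 1 := by nlinarith
    have hmpos : 0 < 1 - s*u := by linarith
    have hppos : 0 < 1 + s*u := by linarith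
    have hm : HasDerivAt (fun v : ℝ => 1 - s*v) (-s) u := by
      simpa using ((hasDerivAt_id u).const_mul s).const_sub 1
    have hp : HasDerivAt (fun v : ℝ => 1 + s*v) s u := by
      simpa using ((hasDerivAt_id u).const_mul s).const_add 1
    have hL1 : HasDerivAt (fun v : ℝ => Real.log (1-s*v)) (-s/(1-s*u)) u :=
      hm.log hmpos.ne'
    have hL2 : HasDerivAt (fun v : ℝ => Real.log (1+s*v)) (s/(1+s*u)) u :=
      hp.log hppos.ne'
    have hIm : HasDerivAt (fun v : ℝ => (1-s*v)⁻¹) (-(-s)/(1-s*u)^2) u := hm.inv hmpos.ne'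
    have hIp : HasDerivAt (fun v : ℝ => (1+s*v)⁻¹) (-s/(1+s*u)^2) u := hp.inv hppos.ne'
    have hm2 : 0 < (1-s*u)/2 := by linarith
    have hm2' : (1-s*u)/2 < 1 := by linarith
    have hp2 : 0 < (1+s*u)/2 := by linarith
    have hp2' : (1+s*u)/2 < 1 := by nlinarith
    have hLiM : HasDerivAt (fun v : ℝ => Li2 ((1-s*v)/2))
        ((-Real.log (1 - (1-s*u)/2) / ((1-s*u)/2)) * (-s/2)) u := by
      have := (aux_Li2_hasDerivAt hm2 hm2').comp u (hm.div_const 2)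
      exact this
    have hLiP : HasDerivAt (fun v : ℝ => Li2 ((1+s*v)/2))
        ((-Real.log (1 - (1+s*u)/2) / ((1+s*u)/2)) * (s/2)) u := by
      have := (aux_Li2_hasDerivAt hp2 hp2').comp u (hp.div_const 2)
      exact this
    -- assemble
    have hA : HasDerivAt (fun v : ℝ =>
        q*(q-2)*(Real.log (1+s*v) - Real.log (1-s*v))/(2*s))
        (q*(q-2)*(s/(1+s*u) - -s/(1-s*u))/(2*s)) u := by
      exact (((hL2.sub hL1).const_mul (q*(q-2))).div_const (2*s))
    have hB : HasDerivAt (fun v : ℝ =>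
        (q*s/2) * ( -d*(Real.log (1+s*v) - Real.log (1-s*v))
          + ((Real.log (1+s*v))^2 - (Real.log (1-s*v))^2)/2
          + Li2 ((1-s*v)/2) - Li2 ((1+s*v)/2)
          + Real.log 2*(Real.log (1+s*v) - Real.log (1-s*v)) ))
        ((q*s/2) * ( -d*(s/(1+s*u) - -s/(1-s*u))
          + (2*Real.log (1+s*u)^1*(s/(1+s*u)) - 2*Real.log (1-s*u)^1*(-s/(1-s*u)))/2
          + (-Real.log (1 - (1-s*u)/2) / ((1-s*u)/2)) * (-s/2)
          - (-Real.log (1 - (1+s*u)/2) / ((1+s*u)/2)) * (s/2)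
          + Real.log 2*(s/(1+s*u) - -s/(1-s*u)) )) u := by
      exact (((((hL2.sub hL1).const_mul (-d)).add
        (((hL2.pow 2).sub (hL1.pow 2)).div_const 2)).add hLiM).sub hLiP).add
          ((hL2.sub hL1).const_mul (Real.log 2)) |>.const_mul (q*s/2)
    have hC : HasDerivAt (fun v : ℝ =>
        (q^2/(2*s)) * ( (d - Real.log (1-s*v) - Real.log (1+s*v))
          * ((1-s*v)⁻¹ - (1+s*v)⁻¹) + (Real.log (1+s*v) - Real.log (1-s*v)) ))
        ((q^2/(2*s)) * ( (0 - (-s/(1-s*u)) - s/(1+s*u)) * ((1-s*u)⁻¹ - (1+s*u)⁻¹)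
          + (d - Real.log (1-s*u) - Real.log (1+s*u)) * (-(-s)/(1-s*u)^2 - -s/(1+s*u)^2)
          + (s/(1+s*u) - -s/(1-s*u)) )) u := by
      exact ((((hasDerivAt_const u d).sub hL1).sub hL2).mul (hIm.sub hIp)).add
        (hL2.sub hL1) |>.const_mul (q^2/(2*s))
    have hG := (hA.add hB).add hC
    rw [hGdef]
    refine hG.congr_deriv ?_
    -- now the equality of the derivative expressions
    have h₁ : (1:ℝ) - (1-s*u)/2 = (1+s*u)/2 := by ring
    have h₂ : (1:ℝ) - (1+s*u)/2 = (1-s*u)/2 := by ring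
    have harg : (1:ℝ) - (-z*(1-u^2)) = ((1-s*u)*(1+s*u))/(1-s^2) := by
      have hq1 : (1:ℝ) - s^2 ≠ 0 := by nlinarith
      rw [hz, hqdef]; field_simp; ring
    rw [h₁, h₂, harg,
      Real.log_div (mul_pos hmpos hppos).ne' hq.ne',
      Real.log_mul hmpos.ne' hppos.ne',
      Real.log_div hppos.ne' two_ne_zero,
      Real.log_div hmpos.ne' two_ne_zero, hz]
    rw [hddef, hqdef]
    have hs' : s ≠ 0 := hs0.ne'
    have hm' : (1:ℝ) - s*u ≠ 0 := hmpos.ne'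
    have hp' : (1:ℝ) + s*u ≠ 0 := hppos.ne'
    have hq' : (1:ℝ) - s^2 ≠ 0 := hq.ne'
    field_simp
    ring
  have hcont : ContinuousOn (fun u : ℝ =>
      2*(-z*(1-u^2))*(1 - Real.log (1 - (-z*(1-u^2))))/(1 - (-z*(1-u^2)))^2
        - Real.log (1 - (-z*(1-u^2)))/(1 - (-z*(1-u^2)))) (Set.uIcc (0:ℝ) 1) := by
    have hne : ∀ u ∈ Set.uIcc (0:ℝ) 1, (1:ℝ) - (-z*(1-u^2)) ≠ 0 := by
      intro u hu
      rw [Set.uIcc_of_le (zero_le_one)] at hu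
      have : 0 ≤ 1 - u^2 := by nlinarith [hu.1, hu.2]
      have : 0 ≤ z*(1-u^2) := by positivity
      intro hcon
      nlinarith
    have hbase : ContinuousOn (fun u : ℝ => (1:ℝ) - (-z*(1-u^2))) (Set.uIcc (0:ℝ) 1) := by
      fun_prop
    have hlog : ContinuousOn (fun u : ℝ => Real.log (1 - (-z*(1-u^2)))) (Set.uIcc (0:ℝ) 1) :=
      ContinuousOn.log hbase hne
    apply ContinuousOn.sub
    · apply ContinuousOn.div
      · exact (ContinuousOn.mul (by fun_prop) (continuousOn_const.sub hlog))
      · exact hbase.pow 2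
      · intro u hu; exact pow_ne_zero 2 (hne u hu)
    · exact ContinuousOn.div hlog hbase hne
  rw [intervalIntegral.integral_eq_sub_of_hasDerivAt hderiv hcont.intervalIntegrable]
  have hm1 : (0:ℝ) < 1 - s := by linarith
  have hp1 : (0:ℝ) < 1 + s := by linarith
  have hG0 : G 0 = 0 := by
    simp only [hGdef]
    norm_num [Real.log_one]
  have hd1 : d = Real.log (1-s) + Real.log (1+s) := by
    rw [hddef, show (1:ℝ)-s^2 = (1-s)*(1+s) by ring, Real.log_mul hm1.ne' hp1.ne']
  rw [hG0, sub_zero, hGdef]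
  simp only [mul_one]
  rw [hd1]
  have hs' : s ≠ 0 := hs0.ne'
  field_simp
  ring



lemma aux_harmonic_nonneg (n : ℕ) : (0:ℝ) ≤ (harmonic n : ℝ) := by
  rcases Nat.eq_zero_or_pos n with h | h
  · subst h; simp
  · exact_mod_cast (harmonic_pos h.ne').le

theorem stmt0 (z t : ℝ) (hz0 : 0 ≤ z) (hz1 : z < 1) (ht : t = z / (1 + z)) :
    HasSum
      (fun n : ℕ => ((Nat.centralBinom n : ℝ))⁻¹ * (harmonic n : ℝ) * (-1) ^ n * 4 ^ n * z ^ n)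
      ((1 - t) *
        (Real.sqrt t * Real.log ((1 - Real.sqrt t) / (1 + Real.sqrt t)) *
            (1 + (1 / 4) * Real.log ((1 - t) / 4)) -
          (Real.sqrt t / 2) * (Li2 ((1 + Real.sqrt t) / 2) - Li2 ((1 - Real.sqrt t) / 2)))) := by
  rcases eq_or_lt_of_le hz0 with hz | hzpos
  · -- z = 0
    subst ht
    rw [← hz]
    have hfe : (fun n : ℕ =>
        ((Nat.centralBinom n : ℝ))⁻¹ * (harmonic n : ℝ) * (-1) ^ n * 4 ^ n * (0:ℝ) ^ n)
        = fun _ => (0:ℝ) := by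
      funext n
      cases n with
      | zero => simp [harmonic]
      | succ m => simp [zero_pow]
    rw [hfe]
    have hv : ((1 - 0/(1+0)) *
        (Real.sqrt (0/(1+0)) * Real.log ((1 - Real.sqrt (0/(1+0))) / (1 + Real.sqrt (0/(1+0)))) *
            (1 + (1 / 4) * Real.log ((1 - 0/(1+0)) / 4)) -
          (Real.sqrt (0/(1+0)) / 2) * (Li2 ((1 + Real.sqrt (0/(1+0))) / 2) - Li2 ((1 - Real.sqrt (0/(1+0))) / 2)))) = (0:ℝ) := by
      norm_num
    rw [hv]
    exact hasSum_zero
  · -- z > 0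
    have h1z : (0:ℝ) < 1 + z := by linarith
    have ht0 : 0 < t := by rw [ht]; positivity
    have ht1 : t < 1 := by
      rw [ht, div_lt_one h1z]; linarith
    set s : ℝ := Real.sqrt t with hs_def
    have hs0 : 0 < s := Real.sqrt_pos.2 ht0
    have hs2 : s^2 = t := Real.sq_sqrt ht0.le
    have hs1 : s < 1 := by nlinarith
    have hq : (0:ℝ) < 1 - s^2 := by nlinarith
    have hz_eq : z = s^2/(1-s^2) := by
      have h' : t*(1+z) = z := by rw [ht]; field_simp
      rw [hs2]
      have : 1 - t ≠ 0 := by nlinarith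
      field_simp
      nlinarith [h']
    -- the summand/integral identity
    have hInt : ∀ n : ℕ, (∫ u in (0:ℝ)..1,
        (2*(n:ℝ)+1) * (harmonic n : ℝ) * (-z*(1-u^2))^n)
        = ((Nat.centralBinom n : ℝ))⁻¹ * (harmonic n : ℝ) * (-1) ^ n * 4 ^ n * z ^ n := by
      intro n
      have hfe : (fun u : ℝ => (2*(n:ℝ)+1) * (harmonic n : ℝ) * (-z*(1-u^2))^n)
          = fun u : ℝ => ((2*(n:ℝ)+1) * (harmonic n : ℝ) * (-z)^n) * (1-u^2)^n := by
        funext u; rw [mul_pow]; ring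
      rw [hfe, intervalIntegral.integral_const_mul, aux_beta n]
      have hC : ((Nat.centralBinom n : ℝ)) ≠ 0 := by
        exact_mod_cast (Nat.centralBinom_pos n).ne'
      have h21 : (2*(n:ℝ)+1) ≠ 0 := by positivity
      rw [neg_pow]
      field_simp
    -- swap sum and integral
    set μ : MeasureTheory.Measure ℝ := MeasureTheory.volume.restrict (Set.Ioc 0 1) with hμ
    have hφcont : ∀ n : ℕ, Continuous
        (fun u : ℝ => (2*(n:ℝ)+1) * (harmonic n : ℝ) * (-z*(1-u^2))^n) := by
      intro n; fun_prop
    have hφint : ∀ n : ℕ, MeasureTheory.Integrable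
        (fun u : ℝ => (2*(n:ℝ)+1) * (harmonic n : ℝ) * (-z*(1-u^2))^n) μ := by
      intro n
      have h : MeasureTheory.IntegrableOn
          (fun u : ℝ => (2*(n:ℝ)+1) * (harmonic n : ℝ) * (-z*(1-u^2))^n)
          (Set.Ioc 0 1) MeasureTheory.volume := (hφcont n).integrableOn_Ioc
      exact h
    have hbnd : ∀ n : ℕ, ∀ u ∈ Set.Ioc (0:ℝ) 1,
        ‖(2*(n:ℝ)+1) * (harmonic n : ℝ) * (-z*(1-u^2))^n‖
          ≤ (2*(n:ℝ)+1) * (harmonic n : ℝ) * z^n := by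
      intro n u hu
      obtain ⟨hu0, hu1⟩ := hu
      have h1 : 0 ≤ 1 - u^2 := by nlinarith
      have h2 : 1 - u^2 ≤ 1 := by nlinarith
      have hH : (0:ℝ) ≤ (harmonic n : ℝ) := by exact_mod_cast aux_harmonic_nonneg n
      rw [norm_mul, norm_pow]
      have : ‖-z*(1-u^2)‖ ≤ z := by
        rw [Real.norm_eq_abs, abs_mul, abs_neg, abs_of_nonneg hz0, abs_of_nonneg h1]
        nlinarith
      have hpow : ‖-z*(1-u^2)‖^n ≤ z^n := pow_le_pow_left₀ (norm_nonneg _) this n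
      have hpos : (0:ℝ) ≤ ‖(2*(n:ℝ)+1) * (harmonic n : ℝ)‖ := norm_nonneg _
      have : ‖(2*(n:ℝ)+1) * (harmonic n : ℝ)‖ = (2*(n:ℝ)+1) * (harmonic n : ℝ) := by
        rw [Real.norm_eq_abs, abs_of_nonneg (by positivity)]
      rw [this]
      exact mul_le_mul_of_nonneg_left hpow (by positivity)
    have hnormint : ∀ n : ℕ, (∫ u, ‖(2*(n:ℝ)+1) * (harmonic n : ℝ) * (-z*(1-u^2))^n‖ ∂μ)
        ≤ (2*(n:ℝ)+1) * (harmonic n : ℝ) * z^n := by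
      intro n
      have hle : ∀ᵐ u ∂μ, ‖(2*(n:ℝ)+1) * (harmonic n : ℝ) * (-z*(1-u^2))^n‖
          ≤ (2*(n:ℝ)+1) * (harmonic n : ℝ) * z^n := by
        rw [MeasureTheory.ae_restrict_iff' measurableSet_Ioc]
        exact MeasureTheory.ae_of_all _ (hbnd n)
      calc (∫ u, ‖(2*(n:ℝ)+1) * (harmonic n : ℝ) * (-z*(1-u^2))^n‖ ∂μ)
          ≤ ∫ _, (2*(n:ℝ)+1) * (harmonic n : ℝ) * z^n ∂μ := by
            apply MeasureTheory.integral_mono_of_nonneg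
              (MeasureTheory.ae_of_all _ (fun u => norm_nonneg _))
              (MeasureTheory.integrable_const _) hle
        _ = (2*(n:ℝ)+1) * (harmonic n : ℝ) * z^n := by
            rw [MeasureTheory.integral_const]
            rw [hμ]
            simp [Real.volume_Ioc]
    have hsummable : Summable (fun n : ℕ =>
        ∫ u, ‖(2*(n:ℝ)+1) * (harmonic n : ℝ) * (-z*(1-u^2))^n‖ ∂μ) := by
      have hz1' : ‖z‖ < 1 := by rw [Real.norm_eq_abs, abs_of_nonneg hz0]; exact hz1
      have hs2' : Summable (fun n : ℕ => 2*((n:ℝ)^2*z^n) + (n:ℝ)*z^n) := by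
        apply Summable.add
        · exact (summable_pow_mul_geometric_of_norm_lt_one 2 hz1').mul_left 2
        · simpa using (summable_pow_mul_geometric_of_norm_lt_one 1 hz1')
      apply Summable.of_nonneg_of_le
        (fun n => MeasureTheory.integral_nonneg (fun u => norm_nonneg _))
        (fun n => le_trans (hnormint n) ?_) hs2'
      have hH := aux_harmonic_le n
      have hHn : (0:ℝ) ≤ (harmonic n : ℝ) := by exact_mod_cast aux_harmonic_nonneg n
      have hzn : (0:ℝ) ≤ z^n := by positivity
      nlinarith [mul_le_mul_of_nonneg_left hH (show (0:ℝ) ≤ (2*(n:ℝ)+1)*z^n by positivity)]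
    have hswap := MeasureTheory.hasSum_integral_of_summable_integral_norm hφint hsummable
    -- identify the integral of the tsum
    have htsum_eq : (∫ u, (∑' n : ℕ, (2*(n:ℝ)+1) * (harmonic n : ℝ) * (-z*(1-u^2))^n) ∂μ)
        = ∫ u, (2*(-z*(1-u^2))*(1 - Real.log (1 - (-z*(1-u^2))))/(1 - (-z*(1-u^2)))^2
            - Real.log (1 - (-z*(1-u^2)))/(1 - (-z*(1-u^2)))) ∂μ := by
      rw [hμ]
      apply MeasureTheory.setIntegral_congr_fun measurableSet_Ioc
      intro u hu
      obtain ⟨hu0, hu1⟩ := hu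
      have h1 : 0 ≤ 1 - u^2 := by nlinarith
      have hw : |(-z*(1-u^2))| < 1 := by
        rw [abs_mul, abs_neg, abs_of_nonneg hz0, abs_of_nonneg h1]
        nlinarith
      exact (aux_hasSum_F hw).tsum_eq
    rw [htsum_eq] at hswap
    have hμint : (∫ u, (2*(-z*(1-u^2))*(1 - Real.log (1 - (-z*(1-u^2))))/(1 - (-z*(1-u^2)))^2
            - Real.log (1 - (-z*(1-u^2)))/(1 - (-z*(1-u^2)))) ∂μ)
        = ∫ u in (0:ℝ)..1,
          (2*(-z*(1-u^2))*(1 - Real.log (1 - (-z*(1-u^2))))/(1 - (-z*(1-u^2)))^2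
            - Real.log (1 - (-z*(1-u^2)))/(1 - (-z*(1-u^2)))) := by
      rw [intervalIntegral.integral_of_le zero_le_one, hμ]
    rw [hμint, aux_ftc hs0 hs1 hz_eq] at hswap
    have hfun : (fun n : ℕ => ∫ u, ((2*(n:ℝ)+1) * (harmonic n : ℝ) * (-z*(1-u^2))^n) ∂μ)
        = (fun n : ℕ =>
            ((Nat.centralBinom n : ℝ))⁻¹ * (harmonic n : ℝ) * (-1) ^ n * 4 ^ n * z ^ n) := by
      funext n
      rw [← hInt n, intervalIntegral.integral_of_le zero_le_one, hμ]
    rw [hfun] at hswap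
    have hval : (1-s^2) * (s * (Real.log (1-s) - Real.log (1+s))
          * (1 + (1/4)*(Real.log (1-s^2) - 2*Real.log 2))
        - (s/2) * (Li2 ((1+s)/2) - Li2 ((1-s)/2)))
        = (1 - t) * (s * Real.log ((1 - s) / (1 + s)) *
            (1 + (1 / 4) * Real.log ((1 - t) / 4)) -
          (s / 2) * (Li2 ((1 + s) / 2) - Li2 ((1 - s) / 2))) := by
      rw [← hs2]
      rw [Real.log_div hq.ne' (by norm_num : (4:ℝ) ≠ 0),
        show Real.log 4 = 2*Real.log 2 by
          rw [show (4:ℝ) = 2^2 by norm_num, Real.log_pow]; norm_num,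
        Real.log_div (by linarith : (1:ℝ)-s ≠ 0) (by linarith : (1:ℝ)+s ≠ 0)]
      try ring
    rw [hval] at hswap
    exact hswap
end

section
/- The alternating series ∑_{n=0}^∞ (-1)^n · H_n / binom(2n,n) converges and equals ((4 − log 5)/(5√5)) · log((√5 − 1)/(√5 + 1)) − (2/(5√5)) · ( Li₂((√5 + 1)/(2√5)) − Li₂((√5 − 1)/(2√5)) ). -/
open Real

open Filter MeasureTheory intervalIntegral Finset

lemma li2_summable {x : ℝ} (hx : |x| < 1) :
    Summable (fun n : ℕ => x ^ (n + 1) / ((n : ℝ) + 1) ^ 2) := by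
  apply Summable.of_norm
  apply Summable.of_nonneg_of_le (fun n => norm_nonneg _) (fun n => ?_)
    (summable_geometric_of_lt_one (abs_nonneg x) hx)
  rw [norm_div, norm_pow]
  calc |x| ^ (n+1) / ‖((n:ℝ)+1)^2‖ ≤ |x| ^ (n+1) / 1 := by
        apply div_le_div_of_nonneg_left ?_ ?_ ?_ <;> [skip; norm_num; skip]
        · positivity
        · rw [norm_pow, Real.norm_eq_abs]
          have : (1:ℝ) ≤ |(n:ℝ)+1| := by
            rw [abs_of_nonneg (by positivity)]; linarith [Nat.cast_nonneg (α := ℝ) n]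
          nlinarith
      _ ≤ |x| ^ n := by
        rw [div_one, pow_succ]
        nlinarith [abs_nonneg x, pow_nonneg (abs_nonneg x) n]

lemma li2_hasDerivAt {x : ℝ} (h0 : 0 < x) (h1 : x < 9/10) :
    HasDerivAt Li2 (-Real.log (1 - x) / x) x := by
  have hball : x ∈ Metric.ball (0:ℝ) (19/20) := by
    simp [Real.norm_eq_abs, abs_of_pos h0]; linarith
  have key : HasDerivAt Li2 (∑' n : ℕ, x ^ n / ((n:ℝ) + 1)) x := by
    apply hasDerivAt_of_tendstoUniformlyOn (l := atTop)
      (f := fun N y => ∑ n ∈ range N, y ^ (n+1) / ((n:ℝ)+1)^2)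
      (f' := fun N y => ∑ n ∈ range N, y ^ n / ((n:ℝ)+1))
      (Metric.isOpen_ball) ?_ ?_ ?_ hball
    · apply tendstoUniformlyOn_tsum_nat (u := fun n => (19/20 : ℝ)^n)
        (summable_geometric_of_lt_one (by norm_num) (by norm_num))
      intro n y hy
      rw [Metric.mem_ball, dist_zero_right, Real.norm_eq_abs] at hy
      rw [norm_div, norm_pow, Real.norm_eq_abs]
      calc |y| ^ n / ‖(n:ℝ)+1‖ ≤ |y| ^ n / 1 := by
            apply div_le_div_of_nonneg_left (by positivity) (by norm_num) ?_
            rw [Real.norm_eq_abs, abs_of_nonneg (by positivity)]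
            linarith [Nat.cast_nonneg (α := ℝ) n]
          _ ≤ (19/20)^n := by
            rw [div_one]
            exact pow_le_pow_left₀ (abs_nonneg y) hy.le n
    · filter_upwards with N y hy
      apply HasDerivAt.fun_sum
      intro n _
      have h := (hasDerivAt_pow (n+1) y).div_const (((n:ℝ)+1)^2)
      refine h.congr_deriv ?_
      have : ((n:ℝ)+1) ≠ 0 := by positivity
      push_cast
      field_simp
    · intro y hy
      rw [Metric.mem_ball, dist_zero_right, Real.norm_eq_abs] at hy
      have := (li2_summable (lt_trans hy (by norm_num))).hasSum.tendsto_sum_nat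
      exact this
  convert key using 1
  have hx1 : |x| < 1 := by rw [abs_of_pos h0]; linarith
  have hlog := hasSum_pow_div_log_of_abs_lt_one hx1
  have h2 : HasSum (fun n : ℕ => x ^ n / ((n:ℝ)+1)) (-Real.log (1-x) / x) := by
    have := hlog.mul_left x⁻¹
    have heq : (fun n : ℕ => x⁻¹ * (x ^ (n+1) / ((n:ℝ)+1))) = fun n : ℕ => x ^ n / ((n:ℝ)+1) := by
      funext n
      rw [pow_succ]
      field_simp
    rw [heq] at this
    simpa [div_eq_inv_mul, neg_div] using this
  exact h2.tsum_eq.symm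

-- harmonic cast
lemma harmonic_cast (n : ℕ) : ((harmonic n : ℚ) : ℝ) = ∑ i ∈ range n, ((i:ℝ)+1)⁻¹ := by
  rw [harmonic]
  push_cast
  rfl

lemma summable_logser {y : ℝ} (hy : |y| < 1) :
    Summable (fun n : ℕ => ‖y ^ (n+1) / ((n:ℝ)+1)‖) := by
  apply Summable.of_nonneg_of_le (fun n => norm_nonneg _) (fun n => ?_)
    (summable_geometric_of_lt_one (abs_nonneg y) hy)
  rw [norm_div, norm_pow, Real.norm_eq_abs, Real.norm_eq_abs]
  rw [abs_of_nonneg (by positivity : (0:ℝ) ≤ (n:ℝ)+1)]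
  calc |y|^(n+1) / ((n:ℝ)+1) ≤ |y|^(n+1) / 1 := by
        apply div_le_div_of_nonneg_left (by positivity) (by norm_num)
        linarith [Nat.cast_nonneg (α := ℝ) n]
      _ ≤ |y|^n := by
        rw [div_one, pow_succ]
        nlinarith [abs_nonneg y, pow_nonneg (abs_nonneg y) n]

lemma hs_a {y : ℝ} (hy : |y| < 1) :
    HasSum (fun n : ℕ => ((harmonic n : ℚ) : ℝ) * y ^ n) (-Real.log (1-y) / (1-y)) := by
  have hf := summable_logser hy
  have hg : Summable (fun n : ℕ => ‖y ^ n‖) := by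
    simpa [Real.norm_eq_abs, abs_pow] using summable_geometric_of_lt_one (abs_nonneg y) hy
  have key := hasSum_sum_range_mul_of_summable_norm (f := fun n => y^(n+1)/((n:ℝ)+1))
    (g := fun n => y^n) hf hg
  have h1 : (∑' n : ℕ, y^(n+1)/((n:ℝ)+1)) = -Real.log (1-y) := (hasSum_pow_div_log_of_abs_lt_one hy).tsum_eq
  have h2 : (∑' n : ℕ, y^n) = (1-y)⁻¹ := tsum_geometric_of_abs_lt_one hy
  rw [h1, h2] at key
  have hinner : ∀ n : ℕ, (∑ k ∈ range (n+1), y^(k+1)/((k:ℝ)+1) * y^(n-k))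
      = ((harmonic (n+1) : ℚ) : ℝ) * y^(n+1) := by
    intro n
    rw [harmonic_cast, Finset.sum_mul]
    apply Finset.sum_congr rfl
    intro k hk
    rw [Finset.mem_range] at hk
    have : (k+1) + (n-k) = n+1 := by omega
    rw [div_mul_eq_mul_div, ← pow_add, this]
    ring
  rw [funext hinner] at key
  have key2 : HasSum (fun n : ℕ => ((harmonic n : ℚ) : ℝ) * y ^ n)
      (-Real.log (1-y) * (1-y)⁻¹ + ∑ i ∈ range 1, ((harmonic i : ℚ) : ℝ) * y ^ i) :=
    (hasSum_nat_add_iff' 1).mp (by simpa using key)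
  simpa [div_eq_mul_inv] using key2

lemma hs_b {y : ℝ} (hy : |y| < 1) :
    HasSum (fun n : ℕ => (((n:ℝ)+1) * ((harmonic n : ℚ) : ℝ) - (n:ℝ)) * y ^ n)
      (-Real.log (1-y) / (1-y)^2) := by
  have hf := summable_logser hy
  have hgs : HasSum (fun n : ℕ => ((n:ℝ)+1) * y^n) ((1-y)⁻¹^2) := by
    have h1 : HasSum (fun n : ℕ => (n:ℝ) * y^n) (y / (1-y)^2) :=
      hasSum_coe_mul_geometric_of_norm_lt_one (by simpa [Real.norm_eq_abs] using hy)
    have h2 : HasSum (fun n : ℕ => y^n) ((1-y)⁻¹) :=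
      hasSum_geometric_of_abs_lt_one hy
    have := h1.add h2
    have h1y : (1:ℝ) - y ≠ 0 := by
      intro h; rw [sub_eq_zero] at h; rw [← h] at hy; simp at hy
    convert this using 1
    · funext n; ring
    · field_simp
      ring
  have hg : Summable (fun n : ℕ => ‖((n:ℝ)+1) * y^n‖) := by
    have : HasSum (fun n : ℕ => ((n:ℝ)+1) * |y|^n) ((1-|y|)⁻¹^2) := by
      have h1 : HasSum (fun n : ℕ => (n:ℝ) * |y|^n) (|y| / (1-|y|)^2) :=
        hasSum_coe_mul_geometric_of_norm_lt_one (by simpa [Real.norm_eq_abs, abs_abs] using hy)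
      have h2 : HasSum (fun n : ℕ => |y|^n) ((1-|y|)⁻¹) :=
        hasSum_geometric_of_abs_lt_one (by simpa [abs_abs] using hy)
      have := h1.add h2
      have h1y : (1:ℝ) - |y| ≠ 0 := by
        have := abs_nonneg y; intro h; nlinarith
      convert this using 1
      · funext n; ring
      · field_simp; ring
    apply this.summable.congr
    intro n
    rw [norm_mul, norm_pow, Real.norm_eq_abs, Real.norm_eq_abs,
      abs_of_nonneg (by positivity : (0:ℝ) ≤ (n:ℝ)+1)]
  have key := hasSum_sum_range_mul_of_summable_norm (f := fun n => y^(n+1)/((n:ℝ)+1))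
    (g := fun n => ((n:ℝ)+1) * y^n) hf hg
  have h1 : (∑' n : ℕ, y^(n+1)/((n:ℝ)+1)) = -Real.log (1-y) := (hasSum_pow_div_log_of_abs_lt_one hy).tsum_eq
  have h2 : (∑' n : ℕ, ((n:ℝ)+1) * y^n) = (1-y)⁻¹^2 := hgs.tsum_eq
  rw [h1, h2] at key
  have hinner : ∀ n : ℕ, (∑ k ∈ range (n+1), y^(k+1)/((k:ℝ)+1) * (((((n-k : ℕ)):ℝ)+1) * y^(n-k)))
      = ((((n:ℝ)+1)+1) * ((harmonic (n+1) : ℚ) : ℝ) - ((n:ℝ)+1)) * y^(n+1) := by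
    intro n
    have step : ∀ k ∈ range (n+1), y^(k+1)/((k:ℝ)+1) * (((((n-k : ℕ)):ℝ)+1) * y^(n-k))
        = ((((n:ℝ)+1)+1) * ((k:ℝ)+1)⁻¹ - 1) * y^(n+1) := by
      intro k hk
      rw [Finset.mem_range] at hk
      have hcast : (((n-k : ℕ)):ℝ) = (n:ℝ) - (k:ℝ) := by
        have : (k:ℝ) ≤ (n:ℝ) := by exact_mod_cast Nat.le_of_lt_succ hk
        push_cast [Nat.cast_sub (Nat.le_of_lt_succ hk)]
        ring
      have hpow : y^(k+1) * y^(n-k) = y^(n+1) := by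
        rw [← pow_add]; congr 1; omega
      have hk0 : ((k:ℝ)+1) ≠ 0 := by positivity
      field_simp [hcast]
      linear_combination ((n:ℝ) - (k:ℝ) + 1) * hpow + (y * y^k * y^(n-k)) * hcast
    rw [Finset.sum_congr rfl step, ← Finset.sum_mul]
    congr 1
    rw [harmonic_cast, Finset.sum_sub_distrib, ← Finset.mul_sum, Finset.sum_const,
      Finset.card_range]
    push_cast
    ring
  rw [funext hinner] at key
  set f : ℕ → ℝ := fun n => (((n:ℝ)+1) * ((harmonic n : ℚ) : ℝ) - (n:ℝ)) * y ^ n with hfdef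
  have key2 : HasSum (fun n : ℕ => f (n+1)) (-Real.log (1-y) / (1-y)^2 - ∑ i ∈ range 1, f i) := by
    have hval : -Real.log (1-y) / (1-y)^2 - ∑ i ∈ range 1, f i
        = -Real.log (1-y) * (1-y)⁻¹^2 := by
      simp [hfdef, harmonic, div_eq_mul_inv, inv_pow]
    rw [hval]
    convert key using 2 with n
    · rfl
    simp only [hfdef]
    push_cast
    ring
  exact (hasSum_nat_add_iff' 1).mp key2

noncomputable def Gfun (y : ℝ) : ℝ := (2*y - (1+y) * Real.log (1-y)) / (1-y)^2

lemma hs_G {y : ℝ} (hy : |y| < 1) :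
    HasSum (fun n : ℕ => (2*(n:ℝ)+1) * ((harmonic n : ℚ) : ℝ) * y ^ n) (Gfun y) := by
  have hgeom : HasSum (fun n : ℕ => (n:ℝ) * y^n) (y / (1-y)^2) :=
    hasSum_coe_mul_geometric_of_norm_lt_one (by simpa [Real.norm_eq_abs] using hy)
  have h := (((hs_b hy).mul_left 2).sub (hs_a hy)).add (hgeom.mul_left 2)
  have h1y : (1:ℝ) - y ≠ 0 := by
    intro h'; rw [sub_eq_zero] at h'; rw [← h'] at hy; simp at hy
  have hfun : (fun n : ℕ => 2 * ((((n:ℝ)+1) * ((harmonic n : ℚ) : ℝ) - (n:ℝ)) * y ^ n)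
      - ((harmonic n : ℚ) : ℝ) * y ^ n + 2 * ((n:ℝ) * y^n))
      = fun n : ℕ => (2*(n:ℝ)+1) * ((harmonic n : ℚ) : ℝ) * y ^ n := by
    funext n; ring
  rw [hfun] at h
  convert h using 1
  · rfl
  rw [Gfun]
  field_simp
  ring

lemma beta_nat : ∀ (b a : ℕ), ∫ x in (0:ℝ)..1, x^a * (1-x)^b
    = (a.factorial * b.factorial : ℝ) / ((a+b+1).factorial) := by
  intro b
  induction b with
  | zero =>
    intro a
    simp only [pow_zero, mul_one, integral_pow, one_pow, Nat.factorial_succ, Nat.add_zero,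
      Nat.factorial_zero, Nat.mul_one, Nat.cast_mul]
    have : ((a:ℝ)+1) ≠ 0 := by positivity
    have hfb : ((a.factorial : ℝ)) ≠ 0 := by exact_mod_cast Nat.factorial_ne_zero a
    push_cast
    rw [eq_div_iff (by positivity)]
    field_simp
    simp
  | succ b IH =>
    intro a
    have hu : ∀ x ∈ Set.uIcc (0:ℝ) 1, HasDerivAt (fun x : ℝ => (1-x)^(b+1))
        (-((b:ℝ)+1) * (1-x)^b) x := by
      intro x _
      have h1 : HasDerivAt (fun x : ℝ => 1 - x) (-1) x := by
        simpa using (hasDerivAt_id x).const_sub 1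
      have := (hasDerivAt_pow (b+1) (1-x)).comp x h1
      refine this.congr_deriv ?_
      push_cast
      ring
    have hv : ∀ x ∈ Set.uIcc (0:ℝ) 1, HasDerivAt (fun x : ℝ => x^(a+1) / ((a:ℝ)+1))
        (x^a) x := by
      intro x _
      have := (hasDerivAt_pow (a+1) x).div_const (((a:ℝ)+1))
      refine this.congr_deriv ?_
      have : ((a:ℝ)+1) ≠ 0 := by positivity
      push_cast
      field_simp
    have hint1 : IntervalIntegrable (fun x : ℝ => -((b:ℝ)+1) * (1-x)^b) volume 0 1 :=
      (Continuous.intervalIntegrable (by continuity) 0 1)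
    have hint2 : IntervalIntegrable (fun x : ℝ => x^a) volume 0 1 :=
      (Continuous.intervalIntegrable (by continuity) 0 1)
    have IBP := intervalIntegral.integral_mul_deriv_eq_deriv_mul hu hv hint1 hint2
    -- IBP : ∫ (1-x)^(b+1) * x^a = ... - ∫ (-(b+1))(1-x)^b * (x^(a+1)/(a+1))
    have lhs_eq : (∫ x in (0:ℝ)..1, (1-x)^(b+1) * x^a) = ∫ x in (0:ℝ)..1, x^a * (1-x)^(b+1) := by
      congr 1; funext x; ring
    have rhs_int : (∫ x in (0:ℝ)..1, -((b:ℝ)+1) * (1-x)^b * (x^(a+1) / ((a:ℝ)+1)))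
        = (-((b:ℝ)+1) / ((a:ℝ)+1)) * ∫ x in (0:ℝ)..1, x^(a+1) * (1-x)^b := by
      rw [← intervalIntegral.integral_const_mul]
      congr 1; funext x; ring
    rw [lhs_eq, rhs_int, IH (a+1)] at IBP
    rw [IBP]
    have e1 : a+1+b+1 = a+b+1+1 := by omega
    have e2 : a+(b+1)+1 = a+b+1+1 := by omega
    rw [e1, e2]
    have ha : ((a:ℝ)+1) ≠ 0 := by positivity
    have hfb : (((a+b+1).factorial : ℝ)) ≠ 0 := by
      exact_mod_cast Nat.factorial_ne_zero (a+b+1)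
    simp only [sub_self, zero_pow (Nat.succ_ne_zero b), zero_mul, sub_zero, one_pow, sub_zero,
      zero_pow (Nat.succ_ne_zero a), zero_div, mul_zero, zero_sub, Nat.factorial_succ]
    push_cast
    field_simp

lemma harmonic_nonneg' (n : ℕ) : (0:ℝ) ≤ ((harmonic n : ℚ) : ℝ) := by
  rw [harmonic_cast]
  positivity

lemma harmonic_le (n : ℕ) : ((harmonic n : ℚ) : ℝ) ≤ n := by
  rw [harmonic_cast]
  calc (∑ i ∈ range n, ((i:ℝ)+1)⁻¹) ≤ ∑ i ∈ range n, 1 := by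
        apply Finset.sum_le_sum
        intro i _
        rw [inv_le_one_iff₀]
        right; linarith [Nat.cast_nonneg (α := ℝ) i]
      _ = n := by simp

lemma centralBinom_fact (n : ℕ) :
    (2*(n:ℝ)+1) * ((n.factorial : ℝ) * n.factorial / ((n+n+1).factorial))
      = 1 / (Nat.centralBinom n : ℝ) := by
  have key : Nat.centralBinom n * n.factorial * n.factorial = (2*n).factorial := by
    have := Nat.choose_mul_factorial_mul_factorial (Nat.le_mul_of_pos_left n (by norm_num) : n ≤ 2*n)
    simpa [Nat.centralBinom, two_mul] using this
  have h1 : (n+n+1).factorial = (n+n+1) * (2*n).factorial := by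
    rw [Nat.factorial_succ]
    congr 2
    omega
  have hC : (Nat.centralBinom n : ℝ) ≠ 0 := by
    exact_mod_cast (Nat.centralBinom_pos n).ne'
  have hf : ((2*n).factorial : ℝ) ≠ 0 := by exact_mod_cast Nat.factorial_ne_zero _
  have keyR : (Nat.centralBinom n : ℝ) * n.factorial * n.factorial = (2*n).factorial := by
    exact_mod_cast key
  rw [h1]
  push_cast
  have hd : ((n:ℝ)+n+1) * ((2*n).factorial:ℝ) ≠ 0 := by positivity
  field_simp
  linear_combination (2*(n:ℝ)+1) * keyR

lemma per_term_integral (n : ℕ) :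
    ∫ t in Set.Ioc (0:ℝ) 1, ((2*(n:ℝ)+1) * ((harmonic n : ℚ):ℝ) * (t^2 - t)^n)
      = (-1)^n * ((harmonic n : ℚ):ℝ) / (Nat.centralBinom n : ℝ) := by
  rw [← intervalIntegral.integral_of_le (by norm_num : (0:ℝ) ≤ 1)]
  have hfun : (fun t : ℝ => (2*(n:ℝ)+1) * ((harmonic n : ℚ):ℝ) * (t^2 - t)^n)
      = fun t : ℝ => ((2*(n:ℝ)+1) * ((harmonic n : ℚ):ℝ) * (-1)^n) * (t^n * (1-t)^n) := by
    funext t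
    have : (t^2 - t)^n = (-1)^n * (t^n * (1-t)^n) := by
      rw [← mul_pow, ← mul_pow]
      congr 1
      ring
    rw [this]
    ring
  rw [hfun, intervalIntegral.integral_const_mul, beta_nat n n]
  have hkey := centralBinom_fact n
  have hC : (Nat.centralBinom n : ℝ) ≠ 0 := by
    exact_mod_cast (Nat.centralBinom_pos n).ne'
  linear_combination ((-1:ℝ)^n * ((harmonic n : ℚ):ℝ)) * hkey

lemma norm_integral_eq (n : ℕ) :
    ∫ t in Set.Ioc (0:ℝ) 1, ‖(2*(n:ℝ)+1) * ((harmonic n : ℚ):ℝ) * (t^2 - t)^n‖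
      = ((harmonic n : ℚ):ℝ) / (Nat.centralBinom n : ℝ) := by
  have hcongr : ∀ t ∈ Set.Ioc (0:ℝ) 1,
      ‖(2*(n:ℝ)+1) * ((harmonic n : ℚ):ℝ) * (t^2 - t)^n‖
        = ((2*(n:ℝ)+1) * ((harmonic n : ℚ):ℝ)) * (t^n * (1-t)^n) := by
    intro t ht
    obtain ⟨ht0, ht1⟩ := ht
    have ha : (0:ℝ) ≤ (2*(n:ℝ)+1) * ((harmonic n : ℚ):ℝ) :=
      mul_nonneg (by positivity) (harmonic_nonneg' n)
    rw [Real.norm_eq_abs, abs_mul, abs_of_nonneg ha, abs_pow,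
      abs_of_nonpos (by nlinarith : t^2 - t ≤ 0)]
    congr 1
    rw [← mul_pow]
    congr 1
    ring
  rw [MeasureTheory.setIntegral_congr_fun measurableSet_Ioc hcongr]
  rw [MeasureTheory.integral_const_mul, ← intervalIntegral.integral_of_le (by norm_num : (0:ℝ) ≤ 1),
    beta_nat n n]
  have hkey := centralBinom_fact n
  have hC : (Nat.centralBinom n : ℝ) ≠ 0 := by
    exact_mod_cast (Nat.centralBinom_pos n).ne'
  linear_combination ((harmonic n : ℚ):ℝ) * hkey

lemma summable_norm_integrals :
    Summable (fun n : ℕ => ((harmonic n : ℚ):ℝ) / (Nat.centralBinom n : ℝ)) := by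
  apply Summable.of_nonneg_of_le
    (fun n => div_nonneg (harmonic_nonneg' n) (Nat.cast_nonneg _))
    (fun n => ?_)
    ((summable_pow_mul_geometric_of_norm_lt_one (R := ℝ) 2
      (by rw [Real.norm_eq_abs, abs_of_nonneg (by norm_num : (0:ℝ) ≤ 1/4)]; norm_num)).mul_left 2)
  have hCpos : (0:ℝ) < (Nat.centralBinom n : ℝ) := by
    exact_mod_cast Nat.centralBinom_pos n
  rcases Nat.eq_zero_or_pos n with h | h
  · subst h
    simp [harmonic]
  · have h4 : (4:ℝ)^n ≤ 2*n * (Nat.centralBinom n : ℝ) := by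
      exact_mod_cast Nat.four_pow_le_two_mul_self_mul_centralBinom n h
    have hinv : 1 / (Nat.centralBinom n : ℝ) ≤ 2*n / 4^n := by
      rw [div_le_div_iff₀ hCpos (by positivity)]
      nlinarith
    calc ((harmonic n : ℚ):ℝ) / (Nat.centralBinom n : ℝ)
        ≤ (n:ℝ) * (1 / (Nat.centralBinom n : ℝ)) := by
          rw [mul_one_div]
          gcongr
          exact harmonic_le n
      _ ≤ (n:ℝ) * (2*n / 4^n) := by
          apply mul_le_mul_of_nonneg_left hinv (Nat.cast_nonneg n)
      _ = 2 * ((n:ℝ)^2 * (1/4)^n) := by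
          rw [div_pow, one_pow]
          field_simp

lemma main_hasSum :
    HasSum (fun n : ℕ => (-1) ^ n * ((harmonic n : ℚ) : ℝ) / (Nat.centralBinom n : ℝ))
      (∫ t in Set.Ioc (0:ℝ) 1, Gfun (t^2 - t)) := by
  have hFint : ∀ n : ℕ, Integrable
      (fun t : ℝ => (2*(n:ℝ)+1) * ((harmonic n : ℚ):ℝ) * (t^2 - t)^n)
      (volume.restrict (Set.Ioc (0:ℝ) 1)) := by
    intro n
    exact (Continuous.integrableOn_Ioc (by continuity))
  have hnorm : Summable (fun n : ℕ =>
      ∫ t in Set.Ioc (0:ℝ) 1, ‖(2*(n:ℝ)+1) * ((harmonic n : ℚ):ℝ) * (t^2 - t)^n‖) := by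
    apply Summable.congr summable_norm_integrals
    intro n
    exact (norm_integral_eq n).symm
  have key := MeasureTheory.hasSum_integral_of_summable_integral_norm hFint hnorm
  have h1 : (fun n : ℕ => ∫ t in Set.Ioc (0:ℝ) 1,
      (2*(n:ℝ)+1) * ((harmonic n : ℚ):ℝ) * (t^2 - t)^n)
      = fun n : ℕ => (-1) ^ n * ((harmonic n : ℚ) : ℝ) / (Nat.centralBinom n : ℝ) := by
    funext n
    exact per_term_integral n
  have h2 : (∫ t in Set.Ioc (0:ℝ) 1,
      (∑' n : ℕ, (2*(n:ℝ)+1) * ((harmonic n : ℚ):ℝ) * (t^2 - t)^n))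
      = ∫ t in Set.Ioc (0:ℝ) 1, Gfun (t^2 - t) := by
    apply MeasureTheory.setIntegral_congr_fun measurableSet_Ioc
    intro t ht
    obtain ⟨ht0, ht1⟩ := ht
    have habs : |t^2 - t| < 1 := by
      rw [abs_lt]
      constructor <;> nlinarith
    exact (hs_G habs).tsum_eq
  rw [h1, h2] at key
  exact key

noncomputable def Ffun (t : ℝ) : ℝ :=
  ((-2)/5) * ((Real.log ((1+Real.sqrt 5)/2 - t) + Real.log (t + (Real.sqrt 5 - 1)/2)) *
      ((((1+Real.sqrt 5)/2 - t))⁻¹ - ((t + (Real.sqrt 5 - 1)/2))⁻¹))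
  + ((-2)/(5*Real.sqrt 5)) * (Real.log (t + (Real.sqrt 5 - 1)/2) - Real.log ((1+Real.sqrt 5)/2 - t))
  + (1/(5*Real.sqrt 5)) * ((Real.log (t + (Real.sqrt 5 - 1)/2) - Real.log ((1+Real.sqrt 5)/2 - t)) *
      ((Real.log ((1+Real.sqrt 5)/2 - t) + Real.log (t + (Real.sqrt 5 - 1)/2))/2 + Real.log (Real.sqrt 5))
    + Li2 (((1+Real.sqrt 5)/2 - t)/Real.sqrt 5) - Li2 ((t + (Real.sqrt 5 - 1)/2)/Real.sqrt 5))

lemma sqrt5_facts : (Real.sqrt 5)^2 = 5 ∧ 2 < Real.sqrt 5 ∧ Real.sqrt 5 < 9/4 := by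
  have h5 : Real.sqrt 5 ^ 2 = 5 := Real.sq_sqrt (by norm_num)
  have hpos : 0 < Real.sqrt 5 := Real.sqrt_pos.mpr (by norm_num)
  refine ⟨h5, by nlinarith, by nlinarith⟩

set_option maxHeartbeats 2000000 in
lemma Ffun_hasDerivAt {t : ℝ} (ht0 : 0 ≤ t) (ht1 : t ≤ 1) :
    HasDerivAt Ffun (Gfun (t^2 - t)) t := by
  obtain ⟨hs5, hs2, hs94⟩ := sqrt5_facts
  set s : ℝ := Real.sqrt 5 with hsdef
  have hspos : 0 < s := by linarith
  set P : ℝ := (1+s)/2 - t with hPdef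
  set Q : ℝ := t + (s-1)/2 with hQdef
  have hP : 0 < P := by rw [hPdef]; nlinarith
  have hQ : 0 < Q := by rw [hQdef]; nlinarith
  have hPQs : P + Q = s := by rw [hPdef, hQdef]; ring
  have hPQ : P * Q = 1 + t - t^2 := by
    rw [hPdef, hQdef]; linear_combination (1/4) * hs5
  -- elementary derivatives
  have hPd : HasDerivAt (fun u : ℝ => (1+s)/2 - u) (-1) t := by
    simpa using (hasDerivAt_id t).const_sub ((1+s)/2)
  have hQd : HasDerivAt (fun u : ℝ => u + (s-1)/2) 1 t := by
    simpa using (hasDerivAt_id t).add_const ((s-1)/2)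
  have hA : HasDerivAt (fun u : ℝ => Real.log ((1+s)/2 - u)) (-1 / P) t := hPd.log hP.ne'
  have hB : HasDerivAt (fun u : ℝ => Real.log (u + (s-1)/2)) (1 / Q) t := hQd.log hQ.ne'
  have hIP : HasDerivAt (fun u : ℝ => (((1+s)/2 - u))⁻¹) (-(-1) / P^2) t := hPd.inv hP.ne'
  have hIQ : HasDerivAt (fun u : ℝ => ((u + (s-1)/2))⁻¹) (-1 / Q^2) t := hQd.inv hQ.ne'
  -- Li2 derivatives
  have hPu0 : 0 < P/s := div_pos hP hspos
  have hPu9 : P/s < 9/10 := by rw [div_lt_iff₀ hspos, hPdef]; nlinarith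
  have hQu0 : 0 < Q/s := div_pos hQ hspos
  have hQu9 : Q/s < 9/10 := by rw [div_lt_iff₀ hspos, hQdef]; nlinarith
  have hLiP : HasDerivAt (fun u : ℝ => Li2 (((1+s)/2 - u)/s))
      ((-Real.log (1 - P/s) / (P/s)) * (-1/s)) t := by
    have := (li2_hasDerivAt hPu0 hPu9).comp t (hPd.div_const s)
    exact this
  have hLiQ : HasDerivAt (fun u : ℝ => Li2 ((u + (s-1)/2)/s))
      ((-Real.log (1 - Q/s) / (Q/s)) * (1/s)) t := by
    have := (li2_hasDerivAt hQu0 hQu9).comp t (hQd.div_const s)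
    exact this
  -- assemble
  have hX : HasDerivAt (fun u : ℝ => (Real.log ((1+s)/2 - u) + Real.log (u + (s-1)/2)) *
      ((((1+s)/2 - u))⁻¹ - ((u + (s-1)/2))⁻¹))
      ((-1/P + 1/Q) * (P⁻¹ - Q⁻¹) + (Real.log P + Real.log Q) * (-(-1)/P^2 - -1/Q^2)) t :=
    (hA.add hB).mul (hIP.sub hIQ)
  have hY : HasDerivAt (fun u : ℝ => Real.log (u + (s-1)/2) - Real.log ((1+s)/2 - u))
      (1/Q - -1/P) t := hB.sub hA
  have hZ : HasDerivAt (fun u : ℝ => (Real.log (u + (s-1)/2) - Real.log ((1+s)/2 - u)) *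
      ((Real.log ((1+s)/2 - u) + Real.log (u + (s-1)/2))/2 + Real.log s)
      + Li2 (((1+s)/2 - u)/s) - Li2 ((u + (s-1)/2)/s))
      ((1/Q - -1/P) * ((Real.log P + Real.log Q)/2 + Real.log s)
        + (Real.log Q - Real.log P) * ((-1/P + 1/Q)/2)
        + (-Real.log (1 - P/s) / (P/s)) * (-1/s)
        - (-Real.log (1 - Q/s) / (Q/s)) * (1/s)) t :=
    ((hY.mul (((hA.add hB).div_const 2).add_const (Real.log s))).add hLiP).sub hLiQ
  have hF : HasDerivAt Ffun
      (((-2)/5) * ((-1/P + 1/Q) * (P⁻¹ - Q⁻¹) + (Real.log P + Real.log Q) * (-(-1)/P^2 - -1/Q^2))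
      + ((-2)/(5*s)) * (1/Q - -1/P)
      + (1/(5*s)) * ((1/Q - -1/P) * ((Real.log P + Real.log Q)/2 + Real.log s)
        + (Real.log Q - Real.log P) * ((-1/P + 1/Q)/2)
        + (-Real.log (1 - P/s) / (P/s)) * (-1/s)
        - (-Real.log (1 - Q/s) / (Q/s)) * (1/s))) t := by
    exact ((hX.const_mul ((-2)/5)).add (hY.const_mul ((-2)/(5*s)))).add (hZ.const_mul (1/(5*s)))
  convert hF using 1
  -- now the algebraic identity
  have h1mP : 1 - P/s = Q/s := by
    rw [eq_div_iff hspos.ne', sub_mul, div_mul_cancel₀ _ hspos.ne']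
    linarith
  have h1mQ : 1 - Q/s = P/s := by
    rw [eq_div_iff hspos.ne', sub_mul, div_mul_cancel₀ _ hspos.ne']
    linarith
  rw [h1mP, h1mQ, Real.log_div hQ.ne' hspos.ne', Real.log_div hP.ne' hspos.ne']
  rw [Gfun]
  have hy1 : 1 - (t^2 - t) = P * Q := by linarith [hPQ]
  have hy2 : t^2 - t = 1 - P * Q := by linarith [hPQ]
  rw [hy1, hy2, Real.log_mul hP.ne' hQ.ne']
  rw [show s = P + Q from hPQs.symm]
  have h5' : (P + Q)^2 = 5 := by rw [hPQs]; exact hs5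
  have hPQpos : 0 < P + Q := by linarith
  field_simp
  linear_combination (4*(P+Q)*(Real.log P + Real.log Q - 1)) * h5'

lemma eval_F :
    Ffun 1 - Ffun 0 = ((4 - Real.log 5) / (5 * Real.sqrt 5)) *
          Real.log ((Real.sqrt 5 - 1) / (Real.sqrt 5 + 1)) -
        (2 / (5 * Real.sqrt 5)) *
          (Li2 ((Real.sqrt 5 + 1) / (2 * Real.sqrt 5)) -
            Li2 ((Real.sqrt 5 - 1) / (2 * Real.sqrt 5))) := by
  obtain ⟨hs5, hs2, hs94⟩ := sqrt5_facts
  set s : ℝ := Real.sqrt 5 with hsdef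
  have hspos : 0 < s := by linarith
  rw [Ffun, Ffun]
  have e0P : (1+s)/2 - 0 = (1+s)/2 := by ring
  have e0Q : (0:ℝ) + (s-1)/2 = (s-1)/2 := by ring
  have e1P : (1+s)/2 - 1 = (s-1)/2 := by ring
  have e1Q : (1:ℝ) + (s-1)/2 = (1+s)/2 := by ring
  rw [e0P, e0Q, e1P, e1Q]
  have ea : ((1+s)/2)/s = (s+1)/(2*s) := by
    rw [div_div]; ring_nf
  have eb : ((s-1)/2)/s = (s-1)/(2*s) := by
    rw [div_div]
  rw [ea, eb]
  have hABm : (1+s)/2 * ((s-1)/2) = 1 := by linear_combination (1/4) * hs5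
  have hPne : ((1+s)/2) ≠ 0 := by positivity
  have hQne : ((s-1)/2) ≠ 0 := by
    have : 0 < (s-1)/2 := by linarith
    exact this.ne'
  have hAB : Real.log ((1+s)/2) + Real.log ((s-1)/2) = 0 := by
    rw [← Real.log_mul hPne hQne, hABm, Real.log_one]
  have hlog5 : Real.log 5 = 2 * Real.log s := by
    rw [show (5:ℝ) = s^2 from hs5.symm, Real.log_pow]
    push_cast
    ring
  have hlogfrac : Real.log ((s-1)/(s+1)) = Real.log ((s-1)/2) - Real.log ((1+s)/2) := by
    rw [show (s-1)/(s+1) = ((s-1)/2)/((1+s)/2) by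
      rw [div_div_div_comm]
      norm_num
      rw [add_comm]]
    rw [Real.log_div hQne hPne]
  rw [hlogfrac, hlog5]
  set A : ℝ := Real.log ((1+s)/2)
  set B : ℝ := Real.log ((s-1)/2)
  set C : ℝ := Real.log s
  set La : ℝ := Li2 ((s+1)/(2*s))
  set Lb : ℝ := Li2 ((s-1)/(2*s))
  have hsne : s ≠ 0 := hspos.ne'
  rw [show B = -A from by linarith]
  field_simp
  ring

lemma G_contOn : ContinuousOn (fun t : ℝ => Gfun (t^2 - t)) (Set.uIcc (0:ℝ) 1) := by
  rw [Set.uIcc_of_le (by norm_num : (0:ℝ) ≤ 1)]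
  have hpos : ∀ t ∈ Set.Icc (0:ℝ) 1, (0:ℝ) < 1 - (t^2 - t) := by
    intro t ht
    obtain ⟨h0, h1⟩ := ht
    nlinarith
  unfold Gfun
  apply ContinuousOn.div
  · apply ContinuousOn.sub
    · exact (continuous_const.mul (by continuity)).continuousOn
    · apply ContinuousOn.mul
      · exact (by continuity : Continuous fun t : ℝ => 1 + (t^2 - t)).continuousOn
      · apply ContinuousOn.log
        · exact (by continuity : Continuous fun t : ℝ => 1 - (t^2 - t)).continuousOn
        · intro t ht
          exact (hpos t ht).ne'
  · exact ((by continuity : Continuous fun t : ℝ => (1 - (t^2 - t))^2)).continuousOn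
  · intro t ht
    exact pow_ne_zero 2 (hpos t ht).ne'

theorem stmt3 :
    HasSum (fun n : ℕ => (-1) ^ n * (harmonic n : ℝ) / (Nat.centralBinom n : ℝ))
      (((4 - Real.log 5) / (5 * Real.sqrt 5)) *
          Real.log ((Real.sqrt 5 - 1) / (Real.sqrt 5 + 1)) -
        (2 / (5 * Real.sqrt 5)) *
          (Li2 ((Real.sqrt 5 + 1) / (2 * Real.sqrt 5)) -
            Li2 ((Real.sqrt 5 - 1) / (2 * Real.sqrt 5)))) := by
  have key := main_hasSum
  have hFTC : (∫ t in (0:ℝ)..1, Gfun (t^2 - t)) = Ffun 1 - Ffun 0 := by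
    apply intervalIntegral.integral_eq_sub_of_hasDerivAt
    · intro t ht
      rw [Set.uIcc_of_le (by norm_num : (0:ℝ) ≤ 1)] at ht
      exact Ffun_hasDerivAt ht.1 ht.2
    · exact G_contOn.intervalIntegrable
  have hIoc : (∫ t in Set.Ioc (0:ℝ) 1, Gfun (t^2 - t)) = ∫ t in (0:ℝ)..1, Gfun (t^2 - t) :=
    (intervalIntegral.integral_of_le (by norm_num : (0:ℝ) ≤ 1)).symm
  rw [hIoc, hFTC, eval_F] at key
  exact key
end

section
/- For every natural number n, ∑_{k=0}^n binom(n,k) · (binom(2k,k))⁻¹ · (−1)^k · 4^k = 1/(1 − 2n), where both sides are interpreted as rational (or real) numbers. -/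
noncomputable def aa (k : ℕ) : ℝ := (-1) ^ k * 4 ^ k / (Nat.centralBinom k : ℝ)

lemma cb_ne (k : ℕ) : ((Nat.centralBinom k : ℝ)) ≠ 0 := by
  exact_mod_cast (Nat.centralBinom_pos k).ne'

lemma aa_rec (k : ℕ) : (2 * (k : ℝ) + 1) * aa (k + 1) = -2 * ((k : ℝ) + 1) * aa k := by
  have h' : ((k : ℝ) + 1) * (Nat.centralBinom (k + 1) : ℝ)
      = 2 * (2 * (k : ℝ) + 1) * (Nat.centralBinom k : ℝ) := by
    exact_mod_cast Nat.succ_mul_centralBinom_succ k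
  unfold aa
  rw [mul_div_assoc', mul_div_assoc', div_eq_div_iff (cb_ne _) (cb_ne _)]
  linear_combination (2 * ((-1:ℝ) ^ k * 4 ^ k)) * h'

lemma bin0 (n j : ℕ) :
    ((n : ℝ) - j) * (n.choose j : ℝ) = ((j : ℝ) + 1) * (n.choose (j + 1) : ℝ) := by
  rcases le_or_gt j n with h | h
  · have := Nat.choose_succ_right_eq n j
    have h2 : ((n.choose (j+1) : ℝ)) * ((j : ℝ) + 1) = (n.choose j : ℝ) * ((n : ℝ) - j) := by
      have : (n.choose (j+1) * (j+1) : ℕ) = (n.choose j * (n - j) : ℕ) := this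
      have := congrArg (Nat.cast : ℕ → ℝ) this
      push_cast [Nat.cast_sub h] at this
      linarith [this]
    linarith [h2]
  · rw [Nat.choose_eq_zero_of_lt h, Nat.choose_eq_zero_of_lt (by omega)]
    simp

lemma bin (n j : ℕ) :
    (2 * (n : ℝ) + 1) * ((n+1).choose (j+1) : ℝ)
      = (2 * (n : ℝ) + 3 + 2 * j) * (n.choose (j+1) : ℝ)
        + (2 * (j : ℝ) + 1) * (n.choose j : ℝ) := by
  rw [Nat.choose_succ_succ]
  push_cast
  linear_combination 2 * bin0 n j

noncomputable def GG (n : ℕ) : ℕ → ℝ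
  | 0 => 0
  | (k+1) => (1 - 2 * ((k : ℝ) + 1)) * (n.choose k : ℝ) * aa (k + 1)

lemma pointwise (n k : ℕ) :
    (2 * (n : ℝ) + 1) * ((n+1).choose k : ℝ) * aa k
      - (2 * (n : ℝ) - 1) * (n.choose k : ℝ) * aa k
      = GG n (k + 1) - GG n k := by
  cases k with
  | zero =>
      simp [GG, aa, Nat.centralBinom]
      norm_num [Nat.choose]
  | succ j =>
      have h1 := aa_rec (j + 1)
      have hb := bin n j
      simp only [GG]
      push_cast at h1 ⊢
      linear_combination aa (j+1) * hb + (n.choose (j+1) : ℝ) * h1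

lemma key (n : ℕ) :
    (2 * (n : ℝ) + 1) * (∑ k ∈ Finset.range (n + 2), ((n+1).choose k : ℝ) * aa k)
      = (2 * (n : ℝ) - 1) * (∑ k ∈ Finset.range (n + 1), (n.choose k : ℝ) * aa k) := by
  have h2 : ∑ k ∈ Finset.range (n + 2), (n.choose k : ℝ) * aa k
      = ∑ k ∈ Finset.range (n + 1), (n.choose k : ℝ) * aa k := by
    rw [Finset.sum_range_succ, Nat.choose_succ_self]
    simp
  rw [← h2, Finset.mul_sum, Finset.mul_sum]
  have h3 : ∑ k ∈ Finset.range (n + 2), (GG n (k+1) - GG n k) = GG n (n + 2) - GG n 0 :=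
    Finset.sum_range_sub (GG n) (n+2)
  have h4 : GG n (n + 2) = 0 := by
    simp [GG, Nat.choose_succ_self]
  have h5 : ∑ k ∈ Finset.range (n + 2),
      ((2 * (n : ℝ) + 1) * ((n+1).choose k : ℝ) * aa k
        - (2 * (n : ℝ) - 1) * (n.choose k : ℝ) * aa k) = 0 := by
    calc ∑ k ∈ Finset.range (n + 2),
        ((2 * (n : ℝ) + 1) * ((n+1).choose k : ℝ) * aa k
          - (2 * (n : ℝ) - 1) * (n.choose k : ℝ) * aa k)
        = ∑ k ∈ Finset.range (n + 2), (GG n (k+1) - GG n k) :=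
          Finset.sum_congr rfl fun k _ => pointwise n k
      _ = 0 := by rw [h3, h4]; simp [GG]
  rw [Finset.sum_sub_distrib] at h5
  have := sub_eq_zero.mp h5
  calc ∑ k ∈ Finset.range (n + 2), (2 * (n : ℝ) + 1) * (((n+1).choose k : ℝ) * aa k)
      = ∑ k ∈ Finset.range (n + 2), (2 * (n : ℝ) + 1) * ((n+1).choose k : ℝ) * aa k := by
        simp [mul_assoc]
    _ = ∑ k ∈ Finset.range (n + 2), (2 * (n : ℝ) - 1) * (n.choose k : ℝ) * aa k := this
    _ = ∑ k ∈ Finset.range (n + 2), (2 * (n : ℝ) - 1) * ((n.choose k : ℝ) * aa k) := by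
        simp [mul_assoc]

lemma main_aa (n : ℕ) :
    ∑ k ∈ Finset.range (n + 1), (n.choose k : ℝ) * aa k = 1 / (1 - 2 * (n : ℝ)) := by
  induction n with
  | zero => simp [aa, Nat.centralBinom]
  | succ m ih =>
      have hk := key m
      rw [ih] at hk
      have h2 : (1 - 2 * (m : ℝ)) ≠ 0 := by
        intro h
        have h4 : ((2 * m : ℕ) : ℝ) = 1 := by push_cast; linarith
        have h5 : (2 * m : ℕ) = 1 := by exact_mod_cast h4
        omega
      have h3 : (1 - 2 * ((m : ℝ) + 1)) ≠ 0 := by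
        intro h; nlinarith [Nat.cast_nonneg (α := ℝ) m]
      rw [mul_one_div] at hk
      have hs := (eq_div_iff h2).mp hk
      push_cast
      show ∑ k ∈ Finset.range (m + 2), ((m+1).choose k : ℝ) * aa k
        = 1 / (1 - 2 * ((m : ℝ) + 1))
      rw [eq_div_iff h3]
      apply mul_right_cancel₀ h2
      linear_combination -hs

theorem stmt7 (n : ℕ) :
    ∑ k ∈ Finset.range (n + 1),
        (n.choose k : ℝ) * ((Nat.centralBinom k : ℝ))⁻¹ * (-1) ^ k * 4 ^ k =
      1 / (1 - 2 * (n : ℝ)) := by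
  rw [← main_aa n]
  refine Finset.sum_congr rfl fun k _ => ?_
  unfold aa
  ring
end

section
/- For every real t with 0 < t < 1, ∫₀ᵗ log(1−x²)/(1−x²) dx = (1/4)·log²(1+t) − (1/4)·log²(1−t) + log(√2) · log((1+t)/(1−t)) − (1/2)·( Li₂((1+t)/2) − Li₂((1−t)/2) ). -/
open Real MeasureTheory

lemma Li2_hasDerivAt {x : ℝ} (hx0 : 0 < x) (hx1 : x < 1) :
    HasDerivAt Li2 (-Real.log (1 - x) / x) x := by
  set r : ℝ := (1 + x) / 2 with hr
  have hr1 : r < 1 := by rw [hr]; linarith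
  have hxr : x < r := by rw [hr]; linarith
  have hr0 : 0 < r := by rw [hr]; linarith
  have hsum : Summable fun n : ℕ => r ^ n :=
    summable_geometric_of_lt_one hr0.le hr1
  have key : HasDerivAt (fun z : ℝ => ∑' n : ℕ, z ^ (n + 1) / ((n : ℝ) + 1) ^ 2)
      (∑' n : ℕ, x ^ n / ((n : ℝ) + 1)) x := by
    have hg : ∀ (n : ℕ) (y : ℝ), y ∈ Set.Ioo (-r) r →
        HasDerivAt (fun z : ℝ => z ^ (n + 1) / ((n : ℝ) + 1) ^ 2)
          (y ^ n / ((n : ℝ) + 1)) y := by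
      intro n y _
      have h1 : HasDerivAt (fun z : ℝ => z ^ (n + 1)) (((n : ℝ) + 1) * y ^ n) y := by
        simpa using hasDerivAt_pow (n + 1) y
      have h2 := h1.div_const (((n : ℝ) + 1) ^ 2)
      convert h2 using 1
      rfl
      rfl
      have hn : ((n : ℝ) + 1) ≠ 0 := by positivity
      rw [div_eq_div_iff hn (pow_ne_zero 2 hn)]
      ring
    have hg' : ∀ (n : ℕ) (y : ℝ), y ∈ Set.Ioo (-r) r →
        ‖y ^ n / ((n : ℝ) + 1)‖ ≤ r ^ n := by
      intro n y hy
      have hyr : |y| ≤ r := by rw [abs_le]; exact ⟨hy.1.le, hy.2.le⟩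
      have hn1 : (1 : ℝ) ≤ (n : ℝ) + 1 := by
        have := Nat.cast_nonneg (α := ℝ) n; linarith
      have h1 : ‖y ^ n / ((n : ℝ) + 1)‖ = |y| ^ n / ((n : ℝ) + 1) := by
        rw [norm_div, norm_pow, Real.norm_eq_abs, Real.norm_eq_abs,
          abs_of_nonneg (by linarith : (0 : ℝ) ≤ (n : ℝ) + 1)]
      rw [h1]
      have h2 : |y| ^ n ≤ r ^ n := pow_le_pow_left₀ (abs_nonneg y) hyr n
      have h3 : |y| ^ n / ((n : ℝ) + 1) ≤ |y| ^ n :=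
        div_le_self (by positivity) hn1
      linarith
    have hy0 : (0 : ℝ) ∈ Set.Ioo (-r) r := ⟨by linarith, hr0⟩
    have hg0 : Summable fun n : ℕ => (0 : ℝ) ^ (n + 1) / ((n : ℝ) + 1) ^ 2 := by
      apply summable_of_ne_finset_zero (s := ∅)
      intro n _
      simp
    exact hasDerivAt_tsum_of_isPreconnected hsum isOpen_Ioo isPreconnected_Ioo
      hg hg' hy0 hg0 ⟨by linarith, hxr⟩
  have hx : x ≠ 0 := ne_of_gt hx0
  have habs : |x| < 1 := by rw [abs_of_pos hx0]; exact hx1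
  have hlog := (hasSum_pow_div_log_of_abs_lt_one habs).div_const x
  have heq : (fun n : ℕ => x ^ (n + 1) / ((n : ℝ) + 1) / x) =
      fun n : ℕ => x ^ n / ((n : ℝ) + 1) := by
    funext n
    rw [pow_succ]
    field_simp
  rw [heq] at hlog
  have hLi : Li2 = fun z : ℝ => ∑' n : ℕ, z ^ (n + 1) / ((n : ℝ) + 1) ^ 2 := rfl
  rw [hLi]
  convert key using 1
  exact (hlog.tsum_eq).symm

theorem stmt11 (t : ℝ) (ht0 : 0 < t) (ht1 : t < 1) :
    ∫ x in (0 : ℝ)..t, Real.log (1 - x ^ 2) / (1 - x ^ 2) =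
      (1 / 4) * Real.log (1 + t) ^ 2 - (1 / 4) * Real.log (1 - t) ^ 2 +
        Real.log (Real.sqrt 2) * Real.log ((1 + t) / (1 - t)) -
        (1 / 2) * (Li2 ((1 + t) / 2) - Li2 ((1 - t) / 2)) := by
  set F : ℝ → ℝ := fun x =>
    (1 / 4) * Real.log (1 + x) ^ 2 - (1 / 4) * Real.log (1 - x) ^ 2 +
      Real.log (Real.sqrt 2) * Real.log ((1 + x) / (1 - x)) -
      (1 / 2) * (Li2 ((1 + x) / 2) - Li2 ((1 - x) / 2)) with hF
  have huIcc : Set.uIcc (0 : ℝ) t = Set.Icc 0 t := Set.uIcc_of_le ht0.le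
  have hderiv : ∀ x ∈ Set.uIcc (0 : ℝ) t,
      HasDerivAt F (Real.log (1 - x ^ 2) / (1 - x ^ 2)) x := by
    intro x hx
    rw [huIcc, Set.mem_Icc] at hx
    have hx1 : (0 : ℝ) < 1 + x := by linarith
    have hx2 : (0 : ℝ) < 1 - x := by linarith [hx.2]
    have hx1' : (1 : ℝ) + x ≠ 0 := ne_of_gt hx1
    have hx2' : (1 : ℝ) - x ≠ 0 := ne_of_gt hx2
    -- basic derivatives
    have h1p : HasDerivAt (fun x : ℝ => 1 + x) 1 x := by
      simpa using (hasDerivAt_id x).const_add 1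
    have h1m : HasDerivAt (fun x : ℝ => 1 - x) (-1) x := by
      simpa using (hasDerivAt_id x).const_sub 1
    have hlogp : HasDerivAt (fun x : ℝ => Real.log (1 + x)) (1 / (1 + x)) x := by
      simpa using h1p.log hx1'
    have hlogm : HasDerivAt (fun x : ℝ => Real.log (1 - x)) (-1 / (1 - x)) x := by
      simpa using h1m.log hx2'
    have hsq1 : HasDerivAt (fun x : ℝ => Real.log (1 + x) ^ 2)
        (2 * Real.log (1 + x) * (1 / (1 + x))) x := by
      simpa using hlogp.fun_pow 2
    have hsq2 : HasDerivAt (fun x : ℝ => Real.log (1 - x) ^ 2)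
        (2 * Real.log (1 - x) * (-1 / (1 - x))) x := by
      simpa using hlogm.fun_pow 2
    have hlograt : HasDerivAt (fun x : ℝ => Real.log ((1 + x) / (1 - x)))
        (1 / (1 + x) - -1 / (1 - x)) x := by
      have heven : (fun y : ℝ => Real.log ((1 + y) / (1 - y))) =ᶠ[nhds x]
          fun y : ℝ => Real.log (1 + y) - Real.log (1 - y) := by
        have hxo : x ∈ Set.Ioo (-1 : ℝ) 1 := ⟨by linarith, by linarith [hx.2]⟩
        filter_upwards [isOpen_Ioo.mem_nhds hxo] with y hy
        exact Real.log_div (by nlinarith [hy.1, hy.2]) (by nlinarith [hy.2])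
      exact (hlogp.sub hlogm).congr_of_eventuallyEq heven
    -- Li2 composites
    have hin1 : HasDerivAt (fun x : ℝ => (1 + x) / 2) (1 / 2) x := by
      simpa using h1p.div_const 2
    have hin2 : HasDerivAt (fun x : ℝ => (1 - x) / 2) (-1 / 2) x := by
      simpa using h1m.div_const 2
    have hu1 : (0:ℝ) < (1 + x) / 2 := by linarith
    have hu1' : (1 + x) / 2 < 1 := by linarith [hx.2, ht1]
    have hu2 : (0:ℝ) < (1 - x) / 2 := by linarith
    have hu2' : (1 - x) / 2 < 1 := by linarith [hx.1]
    have hLi1 : HasDerivAt (fun x : ℝ => Li2 ((1 + x) / 2))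
        ((-Real.log (1 - (1 + x) / 2) / ((1 + x) / 2)) * (1 / 2)) x :=
      by have := (Li2_hasDerivAt hu1 hu1').comp x hin1; exact this
    have hLi2 : HasDerivAt (fun x : ℝ => Li2 ((1 - x) / 2))
        ((-Real.log (1 - (1 - x) / 2) / ((1 - x) / 2)) * (-1 / 2)) x :=
      by have := (Li2_hasDerivAt hu2 hu2').comp x hin2; exact this
    have hFderiv : HasDerivAt F
        ((1 / 4) * (2 * Real.log (1 + x) * (1 / (1 + x))) -
          (1 / 4) * (2 * Real.log (1 - x) * (-1 / (1 - x))) +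
          Real.log (Real.sqrt 2) * (1 / (1 + x) - -1 / (1 - x)) -
          (1 / 2) * ((-Real.log (1 - (1 + x) / 2) / ((1 + x) / 2)) * (1 / 2) -
            (-Real.log (1 - (1 - x) / 2) / ((1 - x) / 2)) * (-1 / 2))) x := by
      exact ((((hsq1.const_mul (1/4)).sub (hsq2.const_mul (1/4))).add
        (hlograt.const_mul (Real.log (Real.sqrt 2)))).sub
        ((hLi1.sub hLi2).const_mul (1/2)))
    convert hFderiv using 1
    have e1 : (1 : ℝ) - (1 + x) / 2 = (1 - x) / 2 := by ring
    have e2 : (1 : ℝ) - (1 - x) / 2 = (1 + x) / 2 := by ring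
    have e3 : Real.log ((1 - x) / 2) = Real.log (1 - x) - Real.log 2 :=
      Real.log_div hx2' two_ne_zero
    have e4 : Real.log ((1 + x) / 2) = Real.log (1 + x) - Real.log 2 :=
      Real.log_div hx1' two_ne_zero
    have e5 : Real.log (Real.sqrt 2) = Real.log 2 / 2 := Real.log_sqrt (by norm_num)
    have e6 : (1 : ℝ) - x ^ 2 = (1 + x) * (1 - x) := by ring
    have e7 : Real.log (1 - x ^ 2) = Real.log (1 + x) + Real.log (1 - x) := by
      rw [e6, Real.log_mul hx1' hx2']
    rw [e1, e2, e3, e4, e5, e7, e6]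
    field_simp
    ring
  have hint : IntervalIntegrable (fun x => Real.log (1 - x ^ 2) / (1 - x ^ 2))
      MeasureTheory.volume 0 t := by
    apply ContinuousOn.intervalIntegrable
    have hne : ∀ x ∈ Set.uIcc (0:ℝ) t, 1 - x ^ 2 ≠ 0 := by
      intro x hx
      rw [huIcc, Set.mem_Icc] at hx
      nlinarith [hx.1, hx.2]
    have hc : ContinuousOn (fun x : ℝ => 1 - x ^ 2) (Set.uIcc (0:ℝ) t) :=
      (continuous_const.sub (continuous_pow 2)).continuousOn
    exact (hc.log hne).div hc hne
  have := intervalIntegral.integral_eq_sub_of_hasDerivAt hderiv hint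
  rw [this]
  have hF0 : F 0 = 0 := by
    simp [hF]
  rw [hF0, hF]
  ring
end

section
/- For every real t with 0 < t < 1, (1/2) · ∫_{−t}^{t} log(1+x)/(1−x) dx = log(√2) · log((1+t)/(1−t)) − (1/2)·( Li₂((1+t)/2) − Li₂((1−t)/2) ). -/
open Real MeasureTheory

lemma li2_hasDerivAt_s12 {u : ℝ} (hu0 : 0 < u) (hu1 : u < 1) :
    HasDerivAt Li2 (-Real.log (1 - u) / u) u := by
  set r : ℝ := (1 + u) / 2 with hr
  have hur : u < r := by rw [hr]; linarith
  have hr0 : 0 < r := by rw [hr]; linarith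
  have hr1 : r < 1 := by rw [hr]; linarith
  have key : HasDerivAt (fun z : ℝ => ∑' n : ℕ, z ^ (n + 1) / (n + 1) ^ 2)
      (∑' n : ℕ, u ^ n / (n + 1)) u := by
    apply hasDerivAt_tsum_of_isPreconnected (u := fun n : ℕ => r ^ n)
      (summable_geometric_of_lt_one hr0.le hr1)
      (isOpen_Ioo : IsOpen (Set.Ioo (-r) r)) (convex_Ioo _ _).isPreconnected
      (g := fun (n : ℕ) (z : ℝ) => z ^ (n + 1) / (n + 1) ^ 2)
      (g' := fun (n : ℕ) (z : ℝ) => z ^ n / (n + 1)) (y₀ := 0)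
    · intro n y _
      have h := (hasDerivAt_pow (n + 1) y).div_const (((n : ℝ) + 1) ^ 2)
      have hn : ((n : ℝ) + 1) ≠ 0 := by positivity
      refine h.congr_deriv ?_
      push_cast
      field_simp
    · intro n y hy
      have hy' : |y| ≤ r := by
        rw [abs_le]
        exact ⟨hy.1.le, hy.2.le⟩
      have : |y ^ n / (n + 1)| ≤ |y| ^ n := by
        rw [abs_div, abs_pow]
        have h1 : (1 : ℝ) ≤ |((n : ℝ) + 1)| := by
          rw [abs_of_pos (by positivity)]; linarith [Nat.cast_nonneg (α := ℝ) n]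
        calc |y| ^ n / |((n : ℝ) + 1)| ≤ |y| ^ n / 1 := by
              apply div_le_div_of_nonneg_left (by positivity) one_pos h1
          _ = |y| ^ n := by ring
      calc ‖y ^ n / ((n : ℝ) + 1)‖ ≤ |y| ^ n := this
        _ ≤ r ^ n := pow_le_pow_left₀ (abs_nonneg _) hy' n
    · constructor <;> linarith
    · apply summable_of_ne_finset_zero (s := ∅)
      intro n _
      simp
    · constructor <;> linarith
  have hsum : HasSum (fun n : ℕ => u ^ (n + 1) / (n + 1)) (-Real.log (1 - u)) :=
    hasSum_pow_div_log_of_abs_lt_one (by rw [abs_of_pos hu0]; exact hu1)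
  have hu : u ≠ 0 := hu0.ne'
  have hsum2 : HasSum (fun n : ℕ => u ^ n / (n + 1)) (-Real.log (1 - u) / u) := by
    have := hsum.div_const u
    have e : (fun n : ℕ => u ^ n / (n + 1)) = fun i : ℕ => u ^ (i + 1) / (i + 1) / u := by
      funext n
      rw [pow_succ]
      field_simp
    rw [e]
    exact this
  have hLi : Li2 = fun z : ℝ => ∑' n : ℕ, z ^ (n + 1) / (n + 1) ^ 2 := rfl
  rw [hLi, ← hsum2.tsum_eq]
  exact key

theorem stmt12 (t : ℝ) (ht0 : 0 < t) (ht1 : t < 1) :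
    (1 / 2) * ∫ x in (-t)..t, Real.log (1 + x) / (1 - x) =
      Real.log (Real.sqrt 2) * Real.log ((1 + t) / (1 - t)) -
        (1 / 2) * (Li2 ((1 + t) / 2) - Li2 ((1 - t) / 2)) := by
  have hFt : ∀ x ∈ Set.uIcc (-t) t,
      HasDerivAt (fun y : ℝ => Li2 ((1 - y) / 2) - Real.log 2 * Real.log (1 - y))
        (Real.log (1 + x) / (1 - x)) x := by
    intro x hx
    rw [Set.uIcc_of_le (by linarith)] at hx
    obtain ⟨hx1, hx2⟩ := hx
    have h1x : 0 < 1 + x := by linarith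
    have h1x' : 0 < 1 - x := by linarith
    have hu0 : 0 < (1 - x) / 2 := by linarith
    have hu1 : (1 - x) / 2 < 1 := by linarith
    have hinner : HasDerivAt (fun y : ℝ => (1 - y) / 2) (-1 / 2) x := by
      have := ((hasDerivAt_id x).const_sub 1).div_const 2
      simpa using this
    have h1 := (li2_hasDerivAt_s12 hu0 hu1).comp x hinner
    have h2 : HasDerivAt (fun y : ℝ => Real.log (1 - y)) (-1 / (1 - x)) x := by
      have := (Real.hasDerivAt_log h1x'.ne').comp x (((hasDerivAt_id x).const_sub 1))
      exact this.congr_deriv (by ring)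
    have h3 := h1.sub ((h2.const_mul (Real.log 2)))
    refine h3.congr_deriv ?_
    symm
    have e1 : 1 - (1 - x) / 2 = (1 + x) / 2 := by ring
    rw [e1, Real.log_div h1x.ne' (by norm_num)]
    field_simp
    ring
  have hInt : IntervalIntegrable (fun x => Real.log (1 + x) / (1 - x)) volume (-t) t := by
    apply ContinuousOn.intervalIntegrable
    apply ContinuousOn.div
    · apply ContinuousOn.log (by fun_prop)
      intro x hx
      rw [Set.uIcc_of_le (by linarith)] at hx
      have := hx.1; intro h; linarith
    · fun_prop
    · intro x hx
      rw [Set.uIcc_of_le (by linarith)] at hx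
      have := hx.2; intro h; linarith
  rw [intervalIntegral.integral_eq_sub_of_hasDerivAt hFt hInt]
  have h1t : 0 < 1 + t := by linarith
  have h1t' : 0 < 1 - t := by linarith
  have e1 : 1 - -t = 1 + t := by ring
  rw [e1, Real.log_sqrt (by norm_num), Real.log_div h1t.ne' h1t'.ne']
  ring
end
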